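/- arXiv:1312.3164 — 6 statements merged into one kernel-verified Lean document; each statement's English description precedes it below -/
import Mathlib

section
/- For all integers m, n, u, k with u ≥ 0, k ≥ 2, n ≥ 2 and m ≥ max{u+1, (k-1)(n-1)}, the determinant D(m,n,u,k) equals the sum over i from 0 to ⌊u/k⌋ of (-1)^i · (m-(k-1)(n-1))/(m+n-1-k·i) · C(m+n-1-k·i, n-1-i) · C(u-(k-1)·i, i), where the equality is of rational numbers. -/
/-- Binomial coefficient `C(a,b)` for integers, with the convention that it is `0` when `b < 0`. -/
def ichoose (a b : ℤ) : ℤ := if 0 ≤ b then (a.toNat.choose b.toNat : ℤ) else 0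


open Finset


lemma ichoose_neg {a b : ℤ} (h : b < 0) : ichoose a b = 0 := if_neg (not_le.2 h)

lemma ichoose_zero (a : ℤ) : ichoose a 0 = 1 := by simp [ichoose]

lemma ichoose_nat (a b : ℤ) (hb : 0 ≤ b) : ichoose a b = a.toNat.choose b.toNat := if_pos hb

lemma ichoose_eq_zero {a b : ℤ} (h0 : 0 < b) (h : a < b) : ichoose a b = 0 := by
  rw [ichoose_nat _ _ h0.le, Nat.choose_eq_zero_of_lt (by omega)]
  norm_num

lemma ichoose_pascal (a b : ℤ) (ha : 1 ≤ a) :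
    ichoose a b = ichoose (a - 1) b + ichoose (a - 1) (b - 1) := by
  rcases lt_trichotomy b 0 with h | h | h
  · rw [ichoose_neg h, ichoose_neg h, ichoose_neg (by omega)]; ring
  · subst h
    rw [ichoose_zero, ichoose_zero, ichoose_neg (by norm_num)]; ring
  · rw [ichoose_nat _ _ h.le, ichoose_nat _ _ (by omega), ichoose_nat _ _ (by omega)]
    have h1 : a.toNat = (a - 1).toNat + 1 := by omega
    have h2 : b.toNat = (b - 1).toNat + 1 := by omega
    rw [h1, h2, Nat.choose_succ_succ]
    push_cast; ring

/-- `b * C(a, b) = a * C(a-1, b-1)`. -/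
lemma ichoose_absorb (a b : ℤ) (ha : 0 ≤ a) (hb : 0 ≤ b) :
    b * ichoose a b = a * ichoose (a - 1) (b - 1) := by
  rcases eq_or_lt_of_le hb with h | hb'
  · rw [← h]
    have : ichoose (a - 1) ((0:ℤ) - 1) = 0 := ichoose_neg (by norm_num)
    rw [this]; ring
  rcases eq_or_lt_of_le ha with h | ha'
  · rw [← h, ichoose_eq_zero hb' (by omega)]; ring
  rw [ichoose_nat _ _ hb, ichoose_nat _ _ (by omega)]
  have h1 : a.toNat = (a - 1).toNat + 1 := by omega
  have h2 : b.toNat = (b - 1).toNat + 1 := by omega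
  have := Nat.add_one_mul_choose_eq (a - 1).toNat (b - 1).toNat
  rw [h1, h2]
  have : ((a-1).toNat + 1) * ((a-1).toNat.choose (b-1).toNat)
      = ((a-1).toNat + 1).choose ((b-1).toNat + 1) * ((b-1).toNat + 1) := this
  have hcast := congrArg (fun x : ℕ => (x : ℤ)) this
  push_cast at hcast ⊢
  have hA : ((a-1).toNat : ℤ) + 1 = a := by omega
  have hB : ((b-1).toNat : ℤ) + 1 = b := by omega
  rw [hA, hB] at hcast
  linarith [hcast]

/-- `C(ks, s) = k * C(ks-1, s-1)` for `s ≥ 1`, `k ≥ 0`. -/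
lemma ichoose_kdil (k s : ℤ) (hs : 1 ≤ s) (hk : 0 ≤ k) :
    ichoose (k * s) s = k * ichoose (k * s - 1) (s - 1) := by
  have h := ichoose_absorb (k * s) s (by positivity) (by omega)
  -- s * C(ks, s) = k * s * C(ks - 1, s - 1)
  have hs0 : (s : ℤ) ≠ 0 := by omega
  apply mul_left_cancel₀ hs0
  rw [h]; ring

lemma vdm (Mn : ℕ) : ∀ (T : ℕ) (B Q : ℤ), (Mn : ℤ) ≤ B → Mn ≤ T →
    ∑ t ∈ range (T + 1), (-1 : ℤ) ^ t * ichoose (Mn : ℤ) (t : ℤ) * ichoose (B - t) (Q - t)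
      = ichoose (B - Mn) Q := by
  induction Mn with
  | zero =>
    intro T B Q hB hT
    rw [Finset.sum_eq_single 0]
    · simp [ichoose_zero]
    · intro t _ ht
      rw [show ((0:ℕ):ℤ) = 0 by norm_num,
        ichoose_eq_zero (by exact_mod_cast Nat.pos_of_ne_zero ht) (by exact_mod_cast Nat.pos_of_ne_zero ht)]
      ring
    · intro h; exact absurd (Finset.mem_range.2 (by omega)) h
  | succ M ih =>
    intro T B Q hB hT
    have hsplit : ∀ t ∈ range (T + 1),
        (-1 : ℤ) ^ t * ichoose ((M + 1 : ℕ) : ℤ) (t : ℤ) * ichoose (B - t) (Q - t)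
        = (-1 : ℤ) ^ t * ichoose (M : ℤ) (t : ℤ) * ichoose (B - t) (Q - t)
          + (-1 : ℤ) ^ t * ichoose (M : ℤ) ((t : ℤ) - 1) * ichoose (B - t) (Q - t) := by
      intro t _
      rw [show ((M + 1 : ℕ) : ℤ) = ((M : ℤ) + 1) by push_cast; ring,
        ichoose_pascal ((M : ℤ) + 1) t (by omega)]
      ring_nf
    rw [Finset.sum_congr rfl hsplit, Finset.sum_add_distrib,
      ih T B Q (by push_cast at hB ⊢; omega) (by omega)]
    have hT1 : T = (T - 1) + 1 := by omega
    have h2 : ∑ t ∈ range (T + 1),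
        (-1 : ℤ) ^ t * ichoose (M : ℤ) ((t : ℤ) - 1) * ichoose (B - t) (Q - t)
        = -ichoose (B - 1 - M) (Q - 1) := by
      rw [Finset.sum_range_succ']
      have h0 : (-1 : ℤ) ^ 0 * ichoose (M : ℤ) (((0:ℕ) : ℤ) - 1) * ichoose (B - (0:ℕ)) (Q - (0:ℕ))
          = 0 := by
        rw [show (((0:ℕ):ℤ) - 1) = -1 by norm_num, ichoose_neg (by norm_num)]; ring
      rw [h0, add_zero]
      have hre : ∀ j ∈ range T,
          (-1 : ℤ) ^ (j + 1) * ichoose (M : ℤ) (((j + 1 : ℕ) : ℤ) - 1) * ichoose (B - ((j+1:ℕ):ℤ)) (Q - ((j+1:ℕ):ℤ))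
          = -((-1 : ℤ) ^ j * ichoose (M : ℤ) (j : ℤ) * ichoose ((B - 1) - j) ((Q - 1) - j)) := by
        intro j _
        have e1 : ((j + 1 : ℕ) : ℤ) - 1 = (j : ℤ) := by push_cast; ring
        have e2 : B - ((j+1:ℕ):ℤ) = (B - 1) - j := by push_cast; ring
        have e3 : Q - ((j+1:ℕ):ℤ) = (Q - 1) - j := by push_cast; ring
        rw [e1, e2, e3, pow_succ]
        ring
      rw [Finset.sum_congr rfl hre, Finset.sum_neg_distrib]
      rw [hT1, ih (T - 1) (B - 1) (Q - 1) (by push_cast at hB ⊢; omega) (by omega)]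
    rw [h2]
    have hpas := ichoose_pascal (B - M) Q (by push_cast at hB; omega)
    have e4 : B - ((M+1:ℕ):ℤ) = B - M - 1 := by push_cast; ring
    rw [e4]
    rw [show B - 1 - M = B - M - 1 by ring] at *
    omega
/-- `A u k i = (-1)^i C(u-(k-1)i, i)`. -/
def Aa (u k : ℤ) (i : ℕ) : ℤ := (-1 : ℤ) ^ i * ichoose (u - (k - 1) * i) (i : ℤ)

/-- bracket `C(c+N-ki, N-i) - k C(c+N-ki-1, N-1-i)`. -/
def br (c k : ℤ) (N i : ℕ) : ℤ :=
  ichoose (c + N - k * i) ((N : ℤ) - i) - k * ichoose (c + N - k * i - 1) ((N : ℤ) - 1 - i)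

def FF (k u : ℤ) (N : ℕ) : ℤ :=
  ∑ i ∈ range (N + 1), Aa u k i * ichoose (u + N - k * i) ((N : ℤ) - i)

lemma Aa_eq_zero (u k : ℤ) (hk : 2 ≤ k) (hu : k ≤ u) (i : ℕ) (hi : u < k * i) :
    Aa u k i = 0 := by
  have e : (k - 1) * (i : ℤ) + i = k * i := by ring
  have hI : 1 < (i : ℤ) := by
    have h1 : k * 1 < k * (i : ℤ) := by omega
    exact lt_of_mul_lt_mul_left h1 (by omega)
  rw [Aa, ichoose_eq_zero (by omega) (by omega), mul_zero]

lemma star_term (k u : ℤ) (hk : 2 ≤ k) (hu : k ≤ u) (N I : ℤ) (hN : 1 ≤ N) (hI : 0 ≤ I) :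
    ichoose (u - (k - 1) * I) I * ichoose (u + N - k * I) (N - I)
    = ichoose (u - (k - 1) * I) I * ichoose (u + N - k * I - 1) (N - 1 - I)
      + ichoose (u - 1 - (k - 1) * I) I * ichoose (u - 1 + N - k * I) (N - I)
      + ichoose (u - 1 - (k - 1) * I) (I - 1) * ichoose (u - 1 + N - k * I) (N - I) := by
  have e : (k - 1) * I + I = k * I := by ring
  rcases le_or_gt (k * I) u with h | h
  · have h1 : 1 ≤ u - (k - 1) * I := by
      rcases eq_or_lt_of_le hI with h0 | h0
      · rw [← h0]; omega
      · omega
    have h2 : 1 ≤ u + N - k * I := by omega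
    rw [ichoose_pascal (u - (k - 1) * I) I h1, ichoose_pascal (u + N - k * I) (N - I) h2]
    ring_nf
  · have hI2 : 1 < I := by
      have h1 : k * 1 < k * I := by omega
      exact lt_of_mul_lt_mul_left h1 (by omega)
    rw [ichoose_eq_zero (show (0:ℤ) < I by omega) (by omega),
      ichoose_eq_zero (show (0:ℤ) < I by omega) (by omega),
      ichoose_eq_zero (show (0:ℤ) < I - 1 by omega) (by omega)]
    ring

lemma star (k u : ℤ) (hk : 2 ≤ k) (hu : k ≤ u) (n : ℕ) :
    FF k u (n + 1) = FF k (u - 1) (n + 1) + FF k u n - FF k (u - k) n := by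
  have hmain : FF k u (n + 1)
      = (∑ i ∈ range (n + 2), Aa u k i * ichoose (u + (n+1:ℕ) - k * i - 1) (((n+1:ℕ) : ℤ) - 1 - i))
      + (∑ i ∈ range (n + 2), Aa (u-1) k i * ichoose ((u-1) + (n+1:ℕ) - k * i) (((n+1:ℕ) : ℤ) - i))
      + (∑ i ∈ range (n + 2),
          (-1:ℤ)^i * ichoose (u - 1 - (k-1) * i) ((i:ℤ) - 1) * ichoose ((u-1) + (n+1:ℕ) - k * i) (((n+1:ℕ) : ℤ) - i)) := by
    rw [FF, ← Finset.sum_add_distrib, ← Finset.sum_add_distrib]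
    apply Finset.sum_congr rfl
    intro i _
    have hst := star_term k u hk hu ((n+1:ℕ) : ℤ) (i : ℤ) (by exact_mod_cast Nat.le_add_left 1 n) (Int.natCast_nonneg i)
    have e1 : u - 1 - (k - 1) * (i:ℤ) = (u - 1) - (k-1) * (i:ℤ) := by ring
    simp only [Aa]
    rw [show (n+2) = n+1+1 from rfl] at *
    calc (-1:ℤ)^i * ichoose (u - (k-1)*i) (i:ℤ) * ichoose (u + (n+1:ℕ) - k * i) (((n+1:ℕ):ℤ) - i)
        = (-1:ℤ)^i * (ichoose (u - (k-1)*i) (i:ℤ) * ichoose (u + (n+1:ℕ) - k * i) (((n+1:ℕ):ℤ) - i)) := by ring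
      _ = (-1:ℤ)^i * (ichoose (u - (k - 1) * i) (i:ℤ) * ichoose (u + (n+1:ℕ) - k * i - 1) (((n+1:ℕ):ℤ) - 1 - i)
            + ichoose (u - 1 - (k - 1) * i) (i:ℤ) * ichoose (u - 1 + (n+1:ℕ) - k * i) (((n+1:ℕ):ℤ) - i)
            + ichoose (u - 1 - (k - 1) * i) ((i:ℤ) - 1) * ichoose (u - 1 + (n+1:ℕ) - k * i) (((n+1:ℕ):ℤ) - i)) := by
          rw [hst]
      _ = _ := by ring
  rw [hmain]
  have hs1 : (∑ i ∈ range (n + 2), Aa u k i * ichoose (u + (n+1:ℕ) - k * i - 1) (((n+1:ℕ) : ℤ) - 1 - i))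
      = FF k u n := by
    rw [Finset.sum_range_succ]
    have hz : ichoose (u + (n+1:ℕ) - k * (n+1:ℕ) - 1) (((n+1:ℕ) : ℤ) - 1 - (n+1:ℕ)) = 0 :=
      ichoose_neg (by push_cast; omega)
    rw [hz, mul_zero, add_zero, FF]
    apply Finset.sum_congr rfl
    intro i _
    have e1 : u + ((n+1:ℕ):ℤ) - k * i - 1 = u + (n:ℕ) - k * i := by push_cast; ring
    have e2 : ((n+1:ℕ):ℤ) - 1 - i = ((n:ℕ):ℤ) - i := by push_cast; ring
    rw [e1, e2]
  have hs3 : (∑ i ∈ range (n + 2),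
      (-1:ℤ)^i * ichoose (u - 1 - (k-1) * i) ((i:ℤ) - 1) * ichoose ((u-1) + (n+1:ℕ) - k * i) (((n+1:ℕ) : ℤ) - i))
      = - FF k (u - k) n := by
    rw [Finset.sum_range_succ']
    have hz : ichoose (u - 1 - (k-1) * (0:ℕ)) (((0:ℕ):ℤ) - 1) = 0 := ichoose_neg (by norm_num)
    rw [hz]
    simp only [mul_zero, zero_mul, pow_zero, one_mul, add_zero]
    rw [FF, ← Finset.sum_neg_distrib]
    apply Finset.sum_congr rfl
    intro j _
    have e1 : u - 1 - (k-1) * ((j+1:ℕ):ℤ) = (u - k) - (k-1) * j := by push_cast; ring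
    have e2 : ((j+1:ℕ):ℤ) - 1 = (j:ℕ) := by push_cast; ring
    have e3 : (u-1) + ((n+1:ℕ):ℤ) - k * ((j+1:ℕ):ℤ) = (u - k) + (n:ℕ) - k * j := by push_cast; ring
    have e4 : ((n+1:ℕ):ℤ) - ((j+1:ℕ):ℤ) = ((n:ℕ):ℤ) - j := by push_cast; ring
    rw [e1, e2, e3, e4, Aa, pow_succ]
    ring
  have hs2 : (∑ i ∈ range (n + 2), Aa (u-1) k i * ichoose ((u-1) + (n+1:ℕ) - k * i) (((n+1:ℕ) : ℤ) - i))
      = FF k (u - 1) (n + 1) := rfl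
  rw [hs1, hs2, hs3]
  ring
lemma TT (k : ℤ) (hk : 2 ≤ k) (n : ℕ) (u : ℤ) (hu2 : u ≤ (k - 1) * ((n+1:ℕ) : ℤ)) :
    ∑ i ∈ range (n + 2), Aa u k i * br ((k - 1) * ((n+1:ℕ) : ℤ)) k (n + 1) i = 0 := by
  apply Finset.sum_eq_zero
  intro i hi
  have hi' : i ≤ n + 1 := by have := Finset.mem_range.1 hi; omega
  rcases eq_or_lt_of_le hi' with h | h
  · -- i = n+1 : first factor vanishes
    have hh : (i:ℤ) = ((n+1:ℕ):ℤ) := by exact_mod_cast h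
    have e3 : (k - 1) * (i:ℤ) = (k - 1) * ((n+1:ℕ):ℤ) := by rw [hh]
    have hi0 : (0:ℤ) < (i:ℤ) := by rw [hh]; exact_mod_cast Nat.succ_pos n
    have hA : Aa u k i = 0 := by
      rw [Aa, ichoose_eq_zero hi0 (by omega), mul_zero]
    rw [hA, zero_mul]
  · -- i < n+1 : bracket vanishes
    have hbr : br ((k - 1) * ((n+1:ℕ) : ℤ)) k (n + 1) i = 0 := by
      set s : ℤ := ((n+1:ℕ) : ℤ) - i with hs
      have hs1 : 1 ≤ s := by
        have : (i:ℤ) < ((n+1:ℕ):ℤ) := by exact_mod_cast h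
        omega
      have e1 : (k - 1) * ((n+1:ℕ) : ℤ) + (n+1:ℕ) - k * i = k * s := by rw [hs]; push_cast; ring
      have e2 : ((n+1:ℕ) : ℤ) - 1 - i = s - 1 := by rw [hs]; ring
      rw [br, e1, e2, ichoose_kdil k s hs1 (by omega)]
      ring
    rw [hbr, mul_zero]

lemma bracket_sum (k u : ℤ) (n : ℕ) :
    ∑ i ∈ range (n + 2), Aa u k i * br u k (n + 1) i = FF k u (n + 1) - k * FF k u n := by
  have : ∀ i ∈ range (n + 2), Aa u k i * br u k (n + 1) i
      = Aa u k i * ichoose (u + (n+1:ℕ) - k * i) (((n+1:ℕ):ℤ) - i)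
        - k * (Aa u k i * ichoose (u + (n+1:ℕ) - k * i - 1) (((n+1:ℕ):ℤ) - 1 - i)) := by
    intro i _; rw [br]; ring
  rw [Finset.sum_congr rfl this, Finset.sum_sub_distrib, ← Finset.mul_sum]
  have h1 : ∑ i ∈ range (n + 2), Aa u k i * ichoose (u + (n+1:ℕ) - k * i) (((n+1:ℕ):ℤ) - i)
      = FF k u (n + 1) := rfl
  have h2 : ∑ i ∈ range (n + 2), Aa u k i * ichoose (u + (n+1:ℕ) - k * i - 1) (((n+1:ℕ):ℤ) - 1 - i)
      = FF k u n := by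
    rw [Finset.sum_range_succ]
    have hz : ichoose (u + (n+1:ℕ) - k * (n+1:ℕ) - 1) (((n+1:ℕ) : ℤ) - 1 - (n+1:ℕ)) = 0 :=
      ichoose_neg (by push_cast; omega)
    rw [hz, mul_zero, add_zero, FF]
    apply Finset.sum_congr rfl
    intro i _
    have e1 : u + ((n+1:ℕ):ℤ) - k * i - 1 = u + (n:ℕ) - k * i := by push_cast; ring
    have e2 : ((n+1:ℕ):ℤ) - 1 - i = ((n:ℕ):ℤ) - i := by push_cast; ring
    rw [e1, e2]
  rw [h1, h2]

lemma FF_eq (k : ℤ) (hk : 2 ≤ k) : ∀ (N : ℕ) (u : ℤ), (k - 1) * N ≤ u → FF k u N = k ^ N := by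
  intro N
  induction N with
  | zero =>
    intro u hu
    simp only [FF, range_one, Finset.sum_singleton, Aa]
    norm_num [ichoose_zero]
  | succ n ih =>
    suffices H : ∀ (d : ℕ) (u : ℤ), u = (k - 1) * ((n+1:ℕ):ℤ) + d → FF k u (n + 1) = k ^ (n + 1) by
      intro u hu
      have h0 : 0 ≤ u - (k - 1) * ((n+1:ℕ):ℤ) := by exact_mod_cast sub_nonneg.2 hu
      exact H (u - (k - 1) * ((n+1:ℕ):ℤ)).toNat u (by omega)
    intro d
    induction d with
    | zero =>
      intro u hu
      have hbase : FF k u (n + 1) - k * FF k u n = 0 := by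
        rw [← bracket_sum]
        have : ∀ i ∈ range (n + 2), Aa u k i * br u k (n + 1) i
            = Aa u k i * br ((k - 1) * ((n+1:ℕ) : ℤ)) k (n + 1) i := by
          intro i _
          rw [hu]; norm_num
        rw [Finset.sum_congr rfl this]
        exact TT k hk n u (by rw [hu]; norm_num)
      have hn : FF k u n = k ^ n := by
        apply ih
        have hcast : ((n:ℕ):ℤ) ≤ ((n+1:ℕ):ℤ) := by exact_mod_cast Nat.le_succ n
        nlinarith [hu, hcast, hk]
      rw [sub_eq_zero] at hbase
      rw [hbase, hn, pow_succ]; ring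
    | succ e ihe =>
      intro u hu
      have e1 : (k - 1) * ((n+1:ℕ):ℤ) = (k-1) * ((n:ℕ):ℤ) + (k - 1) := by push_cast; ring
      have hu' : u = (k-1) * ((n:ℕ):ℤ) + (k - 1) + (e:ℤ) + 1 := by
        rw [hu, ← e1]; push_cast; ring
      have hnn : 0 ≤ (k-1) * ((n:ℕ):ℤ) :=
        mul_nonneg (by omega) (Int.natCast_nonneg n)
      have hu_ge : k ≤ u := by omega
      rw [star k u hk hu_ge n]
      have h1 : FF k (u - 1) (n + 1) = k ^ (n + 1) :=
        ihe (u - 1) (by rw [hu]; push_cast; ring)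
      have h2 : FF k u n = k ^ n := ih u (by omega)
      have h3 : FF k (u - k) n = k ^ n := ih (u - k) (by omega)
      rw [h1, h2, h3]; ring

lemma key (k u : ℤ) (hk : 2 ≤ k) (hu : 0 ≤ u) (n : ℕ) :
    ∑ i ∈ range (n + 2), Aa u k i * br (max u ((k - 1) * ((n+1:ℕ) : ℤ))) k (n + 1) i = 0 := by
  rcases le_or_gt u ((k - 1) * ((n+1:ℕ) : ℤ)) with h | h
  · rw [max_eq_right h]
    exact TT k hk n u h
  · rw [max_eq_left h.le, bracket_sum]
    have h1 : FF k u (n + 1) = k ^ (n + 1) := FF_eq k hk (n+1) u (by exact_mod_cast h.le)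
    have h2 : FF k u n = k ^ n := by
      apply FF_eq k hk n u
      have hc : (k-1) * ((n:ℕ):ℤ) ≤ (k-1) * ((n+1:ℕ):ℤ) := by
        apply mul_le_mul_of_nonneg_left (by exact_mod_cast Nat.le_succ n) (by omega)
      omega
    rw [h1, h2, pow_succ]; ring
lemma vdm' (Mn : ℕ) (T : ℕ) (B Q : ℤ) (h : (Mn : ℤ) ≤ B ∨ Q < 0) (hT : Mn ≤ T) :
    ∑ t ∈ range (T + 1), (-1 : ℤ) ^ t * ichoose (Mn : ℤ) (t : ℤ) * ichoose (B - t) (Q - t)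
      = ichoose (B - Mn) Q := by
  rcases h with h | h
  · exact vdm Mn T B Q h hT
  · rw [ichoose_neg h]
    apply Finset.sum_eq_zero
    intro t _
    rw [ichoose_neg (show Q - (t:ℤ) < 0 by have := Int.natCast_nonneg t; omega), mul_zero]

def gg (m u k : ℤ) (r : ℕ) : ℤ := ∑ i ∈ range (r + 1), Aa u k i * br m k r i

lemma g_rec (m u k : ℤ) (hk : 2 ≤ k) (hu : 0 ≤ u) (hm1 : u + 1 ≤ m) (n : ℕ)
    (hm2 : (k - 1) * ((n+1:ℕ) : ℤ) ≤ m) :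
    gg m u k (n + 1) = ∑ r ∈ range (n + 1),
      (-1 : ℤ) ^ (n - r) * ichoose (m - max u ((k - 1) * ((n+1:ℕ) : ℤ))) (((n+1:ℕ) : ℤ) - r)
        * gg m u k r := by
  set c : ℤ := max u ((k - 1) * ((n+1:ℕ) : ℤ)) with hc
  have hcu : u ≤ c := le_max_left _ _
  have hcn : (k - 1) * ((n+1:ℕ) : ℤ) ≤ c := le_max_right _ _
  have hMc : c ≤ m := max_le (by omega) hm2
  set Mn : ℕ := (m - c).toNat with hMn'
  have hMn : (Mn : ℤ) = m - c := Int.toNat_of_nonneg (by omega)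
  have ee1 : (k - 1) * ((n+1:ℕ) : ℤ) + ((n+1:ℕ) : ℤ) = k * ((n+1:ℕ) : ℤ) := by ring
  -- inner Vandermonde evaluation
  have hinner : ∀ i ∈ range (n + 2),
      (∑ r ∈ range (n + 2), (-1 : ℤ) ^ (n + 1 - r) * ichoose (m - c) (((n+1:ℕ) : ℤ) - r)
        * br m k r i) = br c k (n + 1) i := by
    intro i hi
    have hi' : i ≤ n + 1 := by have := Finset.mem_range.1 hi; omega
    have hki : k * (i : ℤ) ≤ k * ((n+1:ℕ) : ℤ) :=
      mul_le_mul_of_nonneg_left (by exact_mod_cast hi') (by omega)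
    have split : ∀ r ∈ range (n + 2),
        (-1 : ℤ) ^ (n + 1 - r) * ichoose (m - c) (((n+1:ℕ) : ℤ) - r) * br m k r i
        = (-1 : ℤ) ^ (n + 1 - r) * ichoose (m - c) (((n+1:ℕ) : ℤ) - r)
            * ichoose (m + r - k * i) ((r : ℤ) - i)
          - k * ((-1 : ℤ) ^ (n + 1 - r) * ichoose (m - c) (((n+1:ℕ) : ℤ) - r)
            * ichoose (m + r - k * i - 1) ((r : ℤ) - 1 - i)) := by
      intro r _; rw [br]; ring
    rw [Finset.sum_congr rfl split, Finset.sum_sub_distrib, ← Finset.mul_sum]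
    have hX : (∑ r ∈ range (n + 2), (-1 : ℤ) ^ (n + 1 - r) * ichoose (m - c) (((n+1:ℕ) : ℤ) - r)
          * ichoose (m + r - k * i) ((r : ℤ) - i))
        = ichoose (c + ((n+1:ℕ) : ℤ) - k * i) (((n+1:ℕ) : ℤ) - i) := by
      rw [← Finset.sum_range_reflect]
      have hterm : ∀ j ∈ range (n + 2),
          (-1 : ℤ) ^ (n + 1 - (n + 2 - 1 - j)) * ichoose (m - c) (((n+1:ℕ) : ℤ) - ((n + 2 - 1 - j : ℕ) : ℤ))
            * ichoose (m + ((n + 2 - 1 - j : ℕ) : ℤ) - k * i) (((n + 2 - 1 - j : ℕ) : ℤ) - i)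
          = (-1 : ℤ) ^ j * ichoose (Mn : ℤ) (j : ℤ)
            * ichoose ((m + ((n+1:ℕ) : ℤ) - k * i) - j) ((((n+1:ℕ) : ℤ) - i) - j) := by
        intro j hj
        have hj' : j ≤ n + 1 := by have := Finset.mem_range.1 hj; omega
        have e0 : n + 2 - 1 - j = n + 1 - j := by omega
        have ec : ((n + 1 - j : ℕ) : ℤ) = ((n+1:ℕ) : ℤ) - j := by omega
        have eexp : n + 1 - (n + 1 - j) = j := by omega
        rw [e0, ec, eexp]
        have e1 : ((n+1:ℕ) : ℤ) - (((n+1:ℕ) : ℤ) - j) = (j : ℤ) := by ring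
        have e2 : m + (((n+1:ℕ) : ℤ) - j) - k * i = (m + ((n+1:ℕ) : ℤ) - k * i) - j := by ring
        have e3 : (((n+1:ℕ) : ℤ) - j) - i = (((n+1:ℕ) : ℤ) - i) - j := by ring
        rw [e1, e2, e3, show (m - c) = ((Mn:ℕ) : ℤ) from hMn.symm]
      rw [Finset.sum_congr rfl hterm]
      have hsub : range (n + 2) ⊆ range (max Mn (n + 1) + 1) :=
        Finset.range_subset_range.2 (by have := le_max_right Mn (n+1); omega)
      rw [Finset.sum_subset hsub (by
        intro x hx hnx
        have hx1 : n + 2 ≤ x := by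
          by_contra hcon
          exact hnx (Finset.mem_range.2 (by omega))
        rw [ichoose_neg (show (((n+1:ℕ):ℤ) - i) - x < 0 by
          have : ((n+1:ℕ):ℤ) ≤ x := by exact_mod_cast by omega
          have := Int.natCast_nonneg i
          omega), mul_zero])]
      rw [vdm' Mn (max Mn (n+1)) (m + ((n+1:ℕ) : ℤ) - k * i) (((n+1:ℕ) : ℤ) - i)
        (Or.inl (by omega)) (le_max_left _ _)]
      congr 1
      omega
    have hY : (∑ r ∈ range (n + 2), (-1 : ℤ) ^ (n + 1 - r) * ichoose (m - c) (((n+1:ℕ) : ℤ) - r)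
          * ichoose (m + r - k * i - 1) ((r : ℤ) - 1 - i))
        = ichoose (c + ((n+1:ℕ) : ℤ) - k * i - 1) (((n+1:ℕ) : ℤ) - 1 - i) := by
      rw [← Finset.sum_range_reflect]
      have hterm : ∀ j ∈ range (n + 2),
          (-1 : ℤ) ^ (n + 1 - (n + 2 - 1 - j)) * ichoose (m - c) (((n+1:ℕ) : ℤ) - ((n + 2 - 1 - j : ℕ) : ℤ))
            * ichoose (m + ((n + 2 - 1 - j : ℕ) : ℤ) - k * i - 1) (((n + 2 - 1 - j : ℕ) : ℤ) - 1 - i)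
          = (-1 : ℤ) ^ j * ichoose (Mn : ℤ) (j : ℤ)
            * ichoose ((m + ((n+1:ℕ) : ℤ) - k * i - 1) - j) ((((n+1:ℕ) : ℤ) - 1 - i) - j) := by
        intro j hj
        have hj' : j ≤ n + 1 := by have := Finset.mem_range.1 hj; omega
        have e0 : n + 2 - 1 - j = n + 1 - j := by omega
        have ec : ((n + 1 - j : ℕ) : ℤ) = ((n+1:ℕ) : ℤ) - j := by omega
        have eexp : n + 1 - (n + 1 - j) = j := by omega
        rw [e0, ec, eexp]
        have e1 : ((n+1:ℕ) : ℤ) - (((n+1:ℕ) : ℤ) - j) = (j : ℤ) := by ring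
        have e2 : m + (((n+1:ℕ) : ℤ) - j) - k * i - 1 = (m + ((n+1:ℕ) : ℤ) - k * i - 1) - j := by ring
        have e3 : (((n+1:ℕ) : ℤ) - j) - 1 - i = (((n+1:ℕ) : ℤ) - 1 - i) - j := by ring
        rw [e1, e2, e3, show (m - c) = ((Mn:ℕ) : ℤ) from hMn.symm]
      rw [Finset.sum_congr rfl hterm]
      have hsub : range (n + 2) ⊆ range (max Mn (n + 1) + 1) :=
        Finset.range_subset_range.2 (by have := le_max_right Mn (n+1); omega)
      rw [Finset.sum_subset hsub (by
        intro x hx hnx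
        have hx1 : n + 2 ≤ x := by
          by_contra hcon
          exact hnx (Finset.mem_range.2 (by omega))
        rw [ichoose_neg (show (((n+1:ℕ):ℤ) - 1 - i) - x < 0 by
          have : ((n+1:ℕ):ℤ) ≤ x := by exact_mod_cast by omega
          have := Int.natCast_nonneg i
          omega), mul_zero])]
      have hor : (Mn : ℤ) ≤ m + ((n+1:ℕ) : ℤ) - k * i - 1 ∨ ((n+1:ℕ) : ℤ) - 1 - (i:ℤ) < 0 := by
        rcases eq_or_lt_of_le hi' with hh | hh
        · right
          have : (i : ℤ) = ((n+1:ℕ) : ℤ) := by exact_mod_cast hh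
          omega
        · left
          have hki2 : k * ((i : ℤ) + 1) ≤ k * ((n+1:ℕ) : ℤ) :=
            mul_le_mul_of_nonneg_left (by exact_mod_cast hh) (by omega)
          have e4 : k * ((i:ℤ) + 1) = k * i + k := by ring
          omega
      rw [vdm' Mn (max Mn (n+1)) (m + ((n+1:ℕ) : ℤ) - k * i - 1) (((n+1:ℕ) : ℤ) - 1 - i)
        hor (le_max_left _ _)]
      congr 1
      omega
    rw [hX, hY, br]
  -- the vanishing alternating sum
  have hS : (∑ r ∈ range (n + 2), (-1 : ℤ) ^ (n + 1 - r) * ichoose (m - c) (((n+1:ℕ) : ℤ) - r)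
      * gg m u k r) = 0 := by
    have hgg : ∀ r ∈ range (n + 2), gg m u k r = ∑ i ∈ range (n + 2), Aa u k i * br m k r i := by
      intro r hr
      rw [gg]
      apply Finset.sum_subset (Finset.range_subset_range.2 (by have := Finset.mem_range.1 hr; omega))
      intro x hx hnx
      have hrx : r < x := by by_contra hcon; exact hnx (Finset.mem_range.2 (by omega))
      have hrx' : (r : ℤ) < (x : ℤ) := by exact_mod_cast hrx
      rw [br, ichoose_neg (by omega), ichoose_neg (by omega)]
      ring
    have h1 : ∀ r ∈ range (n + 2),
        (-1 : ℤ) ^ (n + 1 - r) * ichoose (m - c) (((n+1:ℕ) : ℤ) - r) * gg m u k r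
        = ∑ i ∈ range (n + 2), (-1 : ℤ) ^ (n + 1 - r) * ichoose (m - c) (((n+1:ℕ) : ℤ) - r)
            * (Aa u k i * br m k r i) := by
      intro r hr
      rw [hgg r hr, Finset.mul_sum]
    rw [Finset.sum_congr rfl h1, Finset.sum_comm]
    have h2 : ∀ i ∈ range (n + 2),
        (∑ r ∈ range (n + 2), (-1 : ℤ) ^ (n + 1 - r) * ichoose (m - c) (((n+1:ℕ) : ℤ) - r)
          * (Aa u k i * br m k r i))
        = Aa u k i * br c k (n + 1) i := by
      intro i hi
      have hre : ∀ r ∈ range (n + 2),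
          (-1 : ℤ) ^ (n + 1 - r) * ichoose (m - c) (((n+1:ℕ) : ℤ) - r) * (Aa u k i * br m k r i)
          = Aa u k i * ((-1 : ℤ) ^ (n + 1 - r) * ichoose (m - c) (((n+1:ℕ) : ℤ) - r) * br m k r i) := by
        intro r _; ring
      rw [Finset.sum_congr rfl hre, ← Finset.mul_sum, hinner i hi]
    rw [Finset.sum_congr rfl h2]
    exact key k u hk hu n
  -- extract the last term
  rw [Finset.sum_range_succ, Nat.sub_self, pow_zero, sub_self, ichoose_zero, one_mul] at hS
  have hfl : ∑ r ∈ range (n + 1),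
      (-1 : ℤ) ^ (n - r) * ichoose (m - c) (((n+1:ℕ) : ℤ) - r) * gg m u k r
      = - ∑ r ∈ range (n + 1),
        (-1 : ℤ) ^ (n + 1 - r) * ichoose (m - c) (((n+1:ℕ) : ℤ) - r) * gg m u k r := by
    rw [← Finset.sum_neg_distrib]
    apply Finset.sum_congr rfl
    intro r hr
    have : n + 1 - r = (n - r) + 1 := by have := Finset.mem_range.1 hr; omega
    rw [this, pow_succ]
    ring
  rw [hfl]
  linarith [hS]
def ent (m u k : ℤ) (i j : ℕ) : ℤ :=
  ichoose (m - max u ((k - 1) * ((j : ℤ) + 1))) ((j : ℤ) - (i : ℤ) + 1)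

def PP (m u k : ℤ) (s : ℕ) : ℤ := Matrix.det (Matrix.of fun i j : Fin s => ent m u k i j)

def CC (m u k : ℤ) (N t : ℕ) : Matrix (Fin (t + 1)) (Fin (t + 1)) ℤ :=
  Matrix.of fun i j =>
    if (j : ℕ) < t then ent m u k i j
    else ichoose (m - max u ((k - 1) * (N : ℤ))) ((N : ℤ) - (i : ℤ))

lemma PP_succ (m u k : ℤ) (t : ℕ) : PP m u k (t + 1) = (CC m u k (t + 1) t).det := by
  unfold PP CC
  congr 1
  ext i j
  simp only [Matrix.of_apply]
  by_cases h : (j : ℕ) < t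
  · rw [if_pos h]
  · rw [if_neg h]
    have hj : (j : ℕ) = t := by omega
    unfold ent
    rw [hj]
    have e1 : (k - 1) * (((t:ℕ) : ℤ) + 1) = (k - 1) * (((t+1:ℕ)) : ℤ) := by push_cast; ring
    have e2 : ((t:ℕ) : ℤ) - (i : ℤ) + 1 = (((t+1:ℕ)) : ℤ) - (i : ℤ) := by push_cast; ring
    rw [e1, e2]

lemma CC_zero (m u k : ℤ) (N : ℕ) :
    (CC m u k N 0).det = ichoose (m - max u ((k - 1) * (N : ℤ))) (N : ℤ) := by
  rw [Matrix.det_fin_one]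
  simp [CC]

lemma CC_succ (m u k : ℤ) (N t : ℕ) :
    (CC m u k N (t + 1)).det
      = ichoose (m - max u ((k - 1) * (N : ℤ))) ((N : ℤ) - ((t + 1 : ℕ) : ℤ)) * PP m u k (t + 1)
        - (CC m u k N t).det := by
  rw [Matrix.det_succ_row (CC m u k N (t + 1)) (Fin.last (t + 1))]
  rw [Fin.sum_univ_castSucc, Fin.sum_univ_castSucc]
  have hzero : ∀ j : Fin t,
      (-1 : ℤ) ^ ((Fin.last (t + 1) : ℕ) + ((j.castSucc.castSucc : Fin (t+2)) : ℕ))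
        * (CC m u k N (t + 1)) (Fin.last (t + 1)) j.castSucc.castSucc
        * ((CC m u k N (t + 1)).submatrix (Fin.last (t + 1)).succAbove
            (j.castSucc.castSucc).succAbove).det = 0 := by
    intro j
    have hjt : (j : ℕ) < t := j.isLt
    have hjv : ((j.castSucc.castSucc : Fin (t+2)) : ℕ) = (j : ℕ) := by simp
    have hent : (CC m u k N (t + 1)) (Fin.last (t + 1)) j.castSucc.castSucc = 0 := by
      simp only [CC, Matrix.of_apply, hjv]
      rw [if_pos (show (j:ℕ) < t + 1 by omega)]
      unfold ent
      rw [ichoose_neg]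
      simp only [Fin.val_last]
      have : ((j:ℕ) : ℤ) < (t : ℤ) := by exact_mod_cast hjt
      push_cast
      omega
    rw [hent]
    ring
  rw [Finset.sum_congr rfl (fun j _ => hzero j), Finset.sum_const_zero, zero_add]
  have hlastv : ((Fin.last (t + 1) : Fin (t+2)) : ℕ) = t + 1 := rfl
  have hccl : (((Fin.last t).castSucc : Fin (t+2)) : ℕ) = t := by simp
  have hsign1 : (-1 : ℤ) ^ ((Fin.last (t + 1) : ℕ) + (((Fin.last t).castSucc : Fin (t+2)) : ℕ))
      = -1 := by
    rw [hlastv, hccl]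
    have h2 : (t + 1) + t = 2 * t + 1 := by omega
    rw [h2, pow_succ, pow_mul]
    norm_num
  have hent1 : (CC m u k N (t + 1)) (Fin.last (t + 1)) (Fin.last t).castSucc = 1 := by
    simp only [CC, Matrix.of_apply, hccl]
    rw [if_pos (show t < t + 1 by omega)]
    unfold ent
    simp only [Fin.val_last]
    rw [show ((t:ℕ) : ℤ) - (((t+1:ℕ)) : ℤ) + 1 = 0 by push_cast; ring, ichoose_zero]
  have hminor1 : ((CC m u k N (t + 1)).submatrix (Fin.last (t + 1)).succAbove
      ((Fin.last t).castSucc : Fin (t+2)).succAbove).det = (CC m u k N t).det := by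
    congr 1
    ext i a
    rw [Fin.succAbove_last]
    simp only [Matrix.submatrix_apply]
    have hsa : ((((Fin.last t).castSucc : Fin (t+2)).succAbove a : Fin (t+2)) : ℕ)
        = if (a : ℕ) < t then (a : ℕ) else (a : ℕ) + 1 := by
      by_cases h : (a : ℕ) < t
      · rw [Fin.succAbove_of_castSucc_lt _ _
          (Fin.castSucc_lt_castSucc_iff.2 (by rw [Fin.lt_def]; simpa using h))]
        simp [h]
      · rw [Fin.succAbove_of_le_castSucc _ _
          (Fin.castSucc_le_castSucc_iff.2 (by rw [Fin.le_def]; simpa using by omega))]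
        simp [h]
    simp only [CC, Matrix.of_apply]
    by_cases h : (a : ℕ) < t
    · rw [if_pos (by rw [hsa, if_pos h]; omega), if_pos h]
      unfold ent
      rw [hsa, if_pos h]
      simp
    · rw [if_neg (by rw [hsa, if_neg h]; omega), if_neg h]
      simp
  have hsign2 : (-1 : ℤ) ^ ((Fin.last (t + 1) : ℕ) + ((Fin.last (t+1) : Fin (t+2)) : ℕ))
      = 1 := by
    rw [hlastv]
    have h2 : (t + 1) + (t + 1) = 2 * (t + 1) := by omega
    rw [h2, pow_mul]
    norm_num
  have hent2 : (CC m u k N (t + 1)) (Fin.last (t + 1)) (Fin.last (t + 1))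
      = ichoose (m - max u ((k - 1) * (N : ℤ))) ((N : ℤ) - ((t + 1 : ℕ) : ℤ)) := by
    simp only [CC, Matrix.of_apply, hlastv]
    rw [if_neg (show ¬ (t + 1 < t + 1) by omega)]
  have hminor2 : ((CC m u k N (t + 1)).submatrix (Fin.last (t + 1)).succAbove
      (Fin.last (t + 1)).succAbove).det = PP m u k (t + 1) := by
    rw [Fin.succAbove_last, PP]
    congr 1
    ext i a
    simp only [Matrix.submatrix_apply, CC, Matrix.of_apply]
    rw [if_pos (by simpa using a.isLt)]
    simp
  rw [hsign1, hent1, hminor1, hsign2, hent2, hminor2]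
  ring

lemma det_CC (m u k : ℤ) (N : ℕ) : ∀ t : ℕ,
    (CC m u k N t).det = ∑ r ∈ range (t + 1),
      (-1 : ℤ) ^ (t - r) * ichoose (m - max u ((k - 1) * (N : ℤ))) ((N : ℤ) - r) * PP m u k r := by
  intro t
  induction t with
  | zero =>
    rw [CC_zero]
    have hP0 : PP m u k 0 = 1 := by
      rw [PP]
      exact Matrix.det_isEmpty
    simp [hP0]
  | succ t ih =>
    rw [CC_succ, ih,
      Finset.sum_range_succ (fun r =>
        (-1 : ℤ) ^ (t + 1 - r) * ichoose (m - max u ((k - 1) * (N : ℤ))) ((N : ℤ) - r) * PP m u k r)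
        (t + 1)]
    have e1 : ∀ r ∈ range (t + 1),
        (-1 : ℤ) ^ (t + 1 - r) * ichoose (m - max u ((k - 1) * (N : ℤ))) ((N : ℤ) - r) * PP m u k r
        = -((-1 : ℤ) ^ (t - r) * ichoose (m - max u ((k - 1) * (N : ℤ))) ((N : ℤ) - r) * PP m u k r) := by
      intro r hr
      have h2 : t + 1 - r = (t - r) + 1 := by have := Finset.mem_range.1 hr; omega
      rw [h2, pow_succ]
      ring
    rw [Finset.sum_congr rfl e1, Finset.sum_neg_distrib, Nat.sub_self, pow_zero]
    ring

lemma P_rec (m u k : ℤ) (n : ℕ) :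
    PP m u k (n + 1) = ∑ r ∈ range (n + 1),
      (-1 : ℤ) ^ (n - r) * ichoose (m - max u ((k - 1) * ((n+1:ℕ) : ℤ))) (((n+1:ℕ) : ℤ) - r)
        * PP m u k r := by
  rw [PP_succ, det_CC]

/-- The determinant `D(m,n,u,k)` of the `(n-1)×(n-1)` matrix with `(i,j)` entry
`C(m - max{u, (k-1)j}, 1 - i + j)` for `i, j = 1, …, n-1`. -/
def D (m n u k : ℤ) : ℤ :=
  Matrix.det (Matrix.of fun i j : Fin (n - 1).toNat =>
    ichoose (m - max u ((k - 1) * ((j : ℤ) + 1))) (1 - ((i : ℤ) + 1) + ((j : ℤ) + 1)))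

theorem det_eq_sum (m n u k : ℤ) (hu : 0 ≤ u) (hk : 2 ≤ k) (hn : 2 ≤ n)
    (hm : max (u + 1) ((k - 1) * (n - 1)) ≤ m) :
    (D m n u k : ℚ) =
      ∑ i ∈ Finset.range ((⌊(u : ℚ) / (k : ℚ)⌋).toNat + 1),
        (-1 : ℚ) ^ i * ((m : ℚ) - ((k : ℚ) - 1) * ((n : ℚ) - 1)) /
            ((m : ℚ) + (n : ℚ) - 1 - (k : ℚ) * (i : ℚ)) *
          (ichoose (m + n - 1 - k * (i : ℤ)) (n - 1 - (i : ℤ)) : ℚ) *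
          (ichoose (u - (k - 1) * (i : ℤ)) (i : ℤ) : ℚ) := by
  have hm1 : u + 1 ≤ m := le_trans (le_max_left _ _) hm
  have hm2 : (k - 1) * (n - 1) ≤ m := le_trans (le_max_right _ _) hm
  set N : ℕ := (n - 1).toNat with hNdef
  have hNz : ((N : ℕ) : ℤ) = n - 1 := Int.toNat_of_nonneg (by omega)
  have hN1 : 1 ≤ N := by omega
  -- D = PP
  have hD : D m n u k = PP m u k N := by
    unfold D PP
    congr 1
    ext i j
    simp only [Matrix.of_apply]
    unfold ent
    congr 1
    push_cast
    ring
  -- PP = gg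
  have hmN : (k - 1) * ((N : ℕ) : ℤ) ≤ m := by rw [hNz]; exact hm2
  have hPg : ∀ s : ℕ, s ≤ N → PP m u k s = gg m u k s := by
    intro s
    induction s using Nat.strong_induction_on with
    | _ s ih =>
      intro hsN
      rcases Nat.eq_zero_or_pos s with hs0 | hs1
      · subst hs0
        have hP0 : PP m u k 0 = 1 := by rw [PP]; exact Matrix.det_isEmpty
        have e5 : ((0:ℕ):ℤ) = 0 := by norm_num
        rw [hP0, gg, Finset.sum_range_one, Aa, br, e5]
        have e1 : m + (0:ℤ) - k * 0 = m := by ring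
        have e3 : u - (k-1) * (0:ℤ) = u := by ring
        have e4 : (0:ℤ) - 1 - 0 = -1 := by ring
        rw [e1, e3, e4, show (0:ℤ) - 0 = 0 by ring, ichoose_zero, ichoose_zero,
          ichoose_neg (by norm_num : (-1:ℤ) < 0)]
        norm_num
      · obtain ⟨t, rfl⟩ : ∃ t, s = t + 1 := ⟨s - 1, by omega⟩
        have hmt : (k - 1) * ((t+1:ℕ) : ℤ) ≤ m := by
          have hc : ((t+1:ℕ) : ℤ) ≤ ((N:ℕ) : ℤ) := by exact_mod_cast hsN
          have := mul_le_mul_of_nonneg_left hc (show (0:ℤ) ≤ k - 1 by omega)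
          omega
        rw [P_rec m u k t, g_rec m u k hk hu hm1 t hmt]
        apply Finset.sum_congr rfl
        intro r hr
        rw [ih r (by have := Finset.mem_range.1 hr; omega) (by have := Finset.mem_range.1 hr; omega)]
  rw [hD, hPg N le_rfl]
  -- floor identification
  have hkt : ((k.toNat : ℕ) : ℤ) = k := Int.toNat_of_nonneg (by omega)
  have hfl : ⌊(u : ℚ) / (k : ℚ)⌋ = u / k := by
    have e : (u : ℚ) / (k : ℚ) = ((u:ℤ) : ℚ) / ((k.toNat : ℕ) : ℚ) := by
      rw [show ((k.toNat : ℕ) : ℚ) = ((((k.toNat : ℕ) : ℤ)) : ℚ) by push_cast; ring, hkt]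
    rw [e, Rat.floor_intCast_div_natCast, hkt]
  set L : ℕ := (⌊(u : ℚ) / (k : ℚ)⌋).toNat with hLdef
  have hLz : ((L : ℕ) : ℤ) = u / k := by
    rw [hLdef, hfl]; exact Int.toNat_of_nonneg (Int.ediv_nonneg hu (by omega))
  have hiL : ∀ i : ℕ, i ≤ L ↔ k * (i : ℤ) ≤ u := by
    intro i
    have h1 : i ≤ L ↔ ((i:ℕ) : ℤ) ≤ ((L:ℕ) : ℤ) := by exact_mod_cast Iff.rfl
    rw [h1, hLz, Int.le_ediv_iff_mul_le (by omega : (0:ℤ) < k)]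
    constructor <;> intro h <;> linarith [h]
  -- common range
  set Bd : ℕ := max L N + 1 with hBd
  have hsub1 : range (L + 1) ⊆ range Bd := Finset.range_subset_range.2 (by omega)
  have hsub2 : range (N + 1) ⊆ range Bd := Finset.range_subset_range.2 (by omega)
  -- extend the RHS sum
  rw [Finset.sum_subset hsub1 (by
    intro x hx hnx
    have hxL : L < x := by by_contra hcon; exact hnx (Finset.mem_range.2 (by omega))
    have hkx : ¬ (k * (x : ℤ) ≤ u) := by
      intro hcon; exact absurd ((hiL x).2 hcon) (by omega)
    have hx1 : 1 ≤ (x : ℤ) := by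
      rcases Nat.eq_zero_or_pos x with h0 | h0
      · exfalso; apply hkx; rw [h0]; push_cast; omega
      · exact_mod_cast h0
    have hC0 : ichoose (u - (k - 1) * (x:ℤ)) (x:ℤ) = 0 := by
      apply ichoose_eq_zero (by omega)
      have e : (k - 1) * (x:ℤ) + (x:ℤ) = k * (x:ℤ) := by ring
      omega
    rw [hC0]
    norm_num)]
  -- extend the gg sum and cast
  have hgg2 : gg m u k N = ∑ i ∈ range Bd, Aa u k i * br m k N i := by
    rw [gg]
    apply Finset.sum_subset hsub2
    intro x hx hnx
    have hNx : N < x := by by_contra hcon; exact hnx (Finset.mem_range.2 (by omega))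
    have hNx' : ((N:ℕ) : ℤ) < (x : ℤ) := by exact_mod_cast hNx
    rw [br, ichoose_neg (by omega), ichoose_neg (by omega)]
    ring
  rw [hgg2]
  push_cast
  apply Finset.sum_congr rfl
  intro i _
  -- per-term identity
  by_cases hki : k * (i : ℤ) ≤ u
  · -- good terms
    have ha : (0:ℤ) < m + n - 1 - k * (i:ℤ) := by omega
    have e1 : m + ((N:ℕ):ℤ) - k * (i:ℤ) = m + n - 1 - k * (i:ℤ) := by omega
    have e2 : ((N:ℕ):ℤ) - (i:ℤ) = n - 1 - (i:ℤ) := by omega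
    have e4 : ((N:ℕ):ℤ) - 1 - (i:ℤ) = n - 1 - (i:ℤ) - 1 := by omega
    rw [Aa, br, e1, e2, e4]
    have hfrac : ((m:ℚ) - ((k:ℚ) - 1) * ((n:ℚ) - 1)) / ((m:ℚ) + (n:ℚ) - 1 - (k:ℚ) * (i:ℚ)) *
        ((ichoose (m + n - 1 - k * (i:ℤ)) (n - 1 - (i:ℤ)) : ℤ) : ℚ)
        = ((ichoose (m + n - 1 - k * (i:ℤ)) (n - 1 - (i:ℤ)) : ℤ) : ℚ)
          - (k:ℚ) * ((ichoose (m + n - 1 - k * (i:ℤ) - 1) (n - 1 - (i:ℤ) - 1) : ℤ) : ℚ) := by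
      rcases lt_or_ge (n - 1 - (i:ℤ)) 0 with hb | hb
      · rw [ichoose_neg hb, ichoose_neg (by omega)]
        norm_num
      · have habs := ichoose_absorb (m + n - 1 - k * (i:ℤ)) (n - 1 - (i:ℤ)) (by omega) hb
        have habsQ : ((n:ℚ) - 1 - (i:ℚ)) *
            ((ichoose (m + n - 1 - k * (i:ℤ)) (n - 1 - (i:ℤ)) : ℤ) : ℚ)
            = ((m:ℚ) + (n:ℚ) - 1 - (k:ℚ) * (i:ℚ)) *
              ((ichoose (m + n - 1 - k * (i:ℤ) - 1) (n - 1 - (i:ℤ) - 1) : ℤ) : ℚ) := by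
          exact_mod_cast habs
        have haQ : ((m:ℚ) + (n:ℚ) - 1 - (k:ℚ) * (i:ℚ)) ≠ 0 := by
          exact_mod_cast ha.ne'
        field_simp
        linear_combination (-(k:ℚ)) * habsQ
    push_cast
    rw [← hfrac]
    ring
  · -- vanishing terms
    have hi1 : 1 ≤ (i : ℤ) := by
      rcases Nat.eq_zero_or_pos i with h0 | h0
      · exfalso; apply hki; rw [h0]; push_cast; omega
      · exact_mod_cast h0
    have hC0 : ichoose (u - (k - 1) * (i:ℤ)) (i:ℤ) = 0 := by
      apply ichoose_eq_zero (by omega)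
      have e : (k - 1) * (i:ℤ) + (i:ℤ) = k * (i:ℤ) := by ring
      omega
    rw [Aa, hC0]
    norm_num
end

section
/- For all integers m, n, u, k with u ≥ 0, k ≥ 2, n ≥ 2 and m ≥ max{u+1, (k-1)(n-1)}, the cardinality |L(u+1,1;m,n;k)| equals the sum over i from 0 to ⌊u/k⌋ of (-1)^i · (m-(k-1)(n-1))/(m+n-1-k·i) · C(m+n-1-k·i, n-1-i) · C(u-(k-1)·i, i), where the equality is of rational numbers; by convention |L(u+1,1;(k-1)(n-1),n;k)| = 0 when m = (k-1)(n-1). -/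
/-- `L(u+1,1;m,n;k)`: lattice paths from `(u+1,1)` to `(m,n)` with unit steps `(1,0)` and `(0,1)`
(encoded as the list of steps, `true` = `(1,0)`, `false` = `(0,1)`) such that every point `(x,y)`
on the path satisfies `(k-1)(y-1) ≤ x-1`. -/
def L (u k m n : ℤ) : Set (List Bool) :=
  { s | (u + 1) + (s.count true : ℤ) = m ∧ 1 + (s.count false : ℤ) = n ∧
        ∀ t, t <+: s →
          (k - 1) * ((1 + (t.count false : ℤ)) - 1) ≤ ((u + 1) + (t.count true : ℤ)) - 1 }

set_option linter.unusedVariables false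

namespace CardL

lemma ichoose_neg {a b : ℤ} (h : b < 0) : ichoose a b = 0 := by
  simp [ichoose, not_le.2 h]

lemma ichoose_of_nonneg {a b : ℤ} (h : 0 ≤ b) : ichoose a b = (a.toNat.choose b.toNat : ℤ) := by
  simp [ichoose, h]

lemma ichoose_zero_right (a : ℤ) : ichoose a 0 = 1 := by simp [ichoose]

lemma ichoose_eq_zero_of_lt {a b : ℤ} (hb : 0 < b) (h : a < b) : ichoose a b = 0 := by
  rw [ichoose_of_nonneg hb.le]
  have : a.toNat < b.toNat := by omega
  simp [Nat.choose_eq_zero_of_lt this]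

lemma ichoose_pascal {a b : ℤ} (ha : 1 ≤ a) (hb : 0 ≤ b) :
    ichoose a b = ichoose (a - 1) b + ichoose (a - 1) (b - 1) := by
  rcases eq_or_lt_of_le hb with rfl | hb'
  · simp [ichoose_zero_right, ichoose_neg (show (-1:ℤ) < 0 by norm_num)]
  · have hb1 : (1:ℤ) ≤ b := hb'
    rw [ichoose_of_nonneg hb, ichoose_of_nonneg hb, ichoose_of_nonneg (by omega)]
    obtain ⟨n, hn⟩ : ∃ n : ℕ, a.toNat = n + 1 := ⟨a.toNat - 1, by omega⟩
    obtain ⟨j, hj⟩ : ∃ j : ℕ, b.toNat = j + 1 := ⟨b.toNat - 1, by omega⟩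
    have h1 : (a - 1).toNat = n := by omega
    have h2 : (b - 1).toNat = j := by omega
    rw [hn, hj, h1, h2, Nat.choose_succ_succ]
    push_cast; ring

def Fq (k c a : ℤ) : ℚ := (c : ℚ) / ((c : ℚ) + (k : ℚ) * (a : ℚ)) * (ichoose (c + k * a) a : ℚ)

lemma Fq_zero (k a : ℤ) : Fq k 0 a = 0 := by simp [Fq]

lemma Fq_neg (k c : ℤ) {a : ℤ} (h : a < 0) : Fq k c a = 0 := by
  simp [Fq, ichoose_neg h]


lemma Fq_rec {k c a : ℤ} (hk : 2 ≤ k) (hc : 1 ≤ c) (h : ¬(c = 1 ∧ a = 0)) :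
    Fq k c a = Fq k (c - 1) a + Fq k (c + k - 1) (a - 1) := by
  rcases lt_trichotomy a 0 with ha | rfl | ha
  · rw [Fq_neg _ _ ha, Fq_neg _ _ ha, Fq_neg _ _ (by omega)]; ring
  · have hc2 : 2 ≤ c := by
      rcases eq_or_lt_of_le hc with h' | h'
      · exact absurd ⟨h'.symm, rfl⟩ h
      · omega
    rw [Fq_neg _ _ (show (0:ℤ) - 1 < 0 by norm_num)]
    simp only [Fq, mul_zero, add_zero, Int.cast_zero, ichoose_zero_right, Int.cast_one, mul_one,
      add_zero]
    rw [div_self (by exact_mod_cast (by omega : c ≠ 0)),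
      div_self (by exact_mod_cast (by omega : c - 1 ≠ 0))]
  · -- a ≥ 1
    obtain ⟨B, hB⟩ : ∃ B : ℕ, a.toNat = B + 1 := ⟨a.toNat - 1, by omega⟩
    have haB : a = (B : ℤ) + 1 := by omega
    have hNpos : 3 ≤ c + k * a := by nlinarith
    obtain ⟨M, hM⟩ : ∃ M : ℕ, (c + k * a).toNat = M + 1 := ⟨(c + k * a).toNat - 1, by omega⟩
    have hMZ : c + k * a = (M : ℤ) + 1 := by omega
    have hAM : B + 1 ≤ M := by nlinarith [hMZ, haB]
    -- ichoose evaluations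
    have e1 : ichoose (c + k * a) a = ((M + 1).choose (B + 1) : ℤ) := by
      rw [ichoose_of_nonneg ha.le, hM, hB]
    have e2 : ichoose (c - 1 + k * a) a = (M.choose (B + 1) : ℤ) := by
      rw [ichoose_of_nonneg ha.le, hB, show (c - 1 + k * a).toNat = M by omega]
    have e3 : ichoose (c + k - 1 + k * (a - 1)) (a - 1) = (M.choose B : ℤ) := by
      have harg : c + k - 1 + k * (a - 1) = (M : ℤ) := by
        have hx : k * (a - 1) = k * a - k := by ring
        omega
      rw [harg, ichoose_of_nonneg (by omega : (0:ℤ) ≤ a - 1),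
        show (a - 1).toNat = B by omega]
      simp
    have f1 : ((M + 1).choose (B + 1) : ℚ) = M.choose (B + 1) + M.choose B := by
      rw [Nat.choose_succ_succ]; push_cast; ring
    have f2 : ((B : ℚ) + 1) * M.choose (B + 1) = ((M : ℚ) - B) * M.choose B := by
      have := Nat.choose_succ_right_eq M B
      have hcast : ((M - B : ℕ) : ℚ) = (M : ℚ) - B := by
        have : B ≤ M := by omega
        push_cast [this]; ring
      calc ((B : ℚ) + 1) * M.choose (B + 1) = ((M.choose (B + 1) * (B + 1) : ℕ) : ℚ) := by
            push_cast; ring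
        _ = ((M.choose B * (M - B) : ℕ) : ℚ) := by rw [this]
        _ = ((M : ℚ) - B) * M.choose B := by push_cast [hcast]; ring
    have hden1 : (c : ℚ) + (k : ℚ) * (a : ℚ) = (M : ℚ) + 1 := by
      have h' : ((c + k * a : ℤ) : ℚ) = ((M + 1 : ℤ) : ℚ) := by rw [hMZ]
      push_cast at h'; linarith
    have hden2 : (c : ℚ) - 1 + (k : ℚ) * (a : ℚ) = (M : ℚ) := by
      rw [show (c:ℚ) - 1 + (k:ℚ)*(a:ℚ) = ((c:ℚ) + (k:ℚ)*(a:ℚ)) - 1 by ring, hden1]; ring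
    have hden3 : (c : ℚ) + (k : ℚ) - 1 + (k : ℚ) * ((a : ℚ) - 1) = (M : ℚ) := by
      rw [show (c:ℚ) + (k:ℚ) - 1 + (k:ℚ)*((a:ℚ)-1) = ((c:ℚ) + (k:ℚ)*(a:ℚ)) - 1 by ring, hden1]
      ring
    have hM0 : ((M : ℚ) + 1) ≠ 0 := by positivity
    have hM1 : (M : ℚ) ≠ 0 := by
      have : 2 ≤ M := by omega
      exact_mod_cast (by omega : (M:ℤ) ≠ 0)
    have haq : (a : ℚ) = (B : ℚ) + 1 := by exact_mod_cast haB
    rw [Fq, Fq, Fq, e1, e2, e3]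
    push_cast
    rw [hden1, hden2, hden3]
    rw [div_mul_eq_mul_div, div_mul_eq_mul_div, div_mul_eq_mul_div, ← add_div,
      div_eq_div_iff hM0 hM1]
    have hNq : (M : ℚ) + 1 = (c : ℚ) + (k : ℚ) * ((B : ℚ) + 1) := by rw [← hden1, haq]
    linear_combination ((c:ℚ) * (M:ℚ)) * f1 + (k:ℚ) * f2 +
      (((M.choose (B+1) : ℕ) : ℚ) + ((M.choose B : ℕ) : ℚ)) * hNq

def Gterm (u k m n : ℤ) (i : ℕ) : ℚ :=
  (-1 : ℚ) ^ i * Fq k (m - (k - 1) * (n - 1)) (n - 1 - (i : ℤ)) *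
    (ichoose (u - (k - 1) * (i : ℤ)) (i : ℤ) : ℚ)

def G (u k m n : ℤ) : ℚ := ∑ i ∈ Finset.range ((u / k).toNat + 1), Gterm u k m n i

lemma Gterm_eq_zero {u k : ℤ} (m n : ℤ) {i : ℕ} (hk : 2 ≤ k) (hu : 0 ≤ u)
    (hi : u / k < (i : ℤ)) : Gterm u k m n i = 0 := by
  have hki : u < (i : ℤ) * k := by
    rwa [Int.ediv_lt_iff_lt_mul (by omega : (0:ℤ) < k)] at hi
  have hipos : (0:ℤ) < (i : ℤ) := lt_of_le_of_lt (Int.ediv_nonneg hu (by omega)) hi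
  have : u - (k - 1) * (i : ℤ) < (i : ℤ) := by nlinarith
  rw [Gterm, ichoose_eq_zero_of_lt hipos this]
  simp

lemma G_eq_sum_range {u k : ℤ} (m n : ℤ) (hk : 2 ≤ k) (hu : 0 ≤ u) {J : ℕ}
    (hJ : (u / k).toNat ≤ J) :
    G u k m n = ∑ i ∈ Finset.range (J + 1), Gterm u k m n i := by
  rw [G]
  apply Finset.sum_subset
  · exact Finset.range_subset_range.2 (by omega)
  · intro i _ hi
    apply Gterm_eq_zero m n hk hu
    simp only [Finset.mem_range, not_lt] at hi
    have h0 : 0 ≤ u / k := Int.ediv_nonneg hu (by omega)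
    omega

lemma G_zero {u k m n : ℤ} (h : m - (k - 1) * (n - 1) = 0) : G u k m n = 0 := by
  rw [G]
  apply Finset.sum_eq_zero
  intro i _
  rw [Gterm, h, Fq_zero]
  ring

lemma G_one {u k m : ℤ} (hk : 2 ≤ k) (hu : 0 ≤ u) (hm : 1 ≤ m) : G u k m 1 = 1 := by
  rw [G, Finset.sum_eq_single_of_mem 0 (Finset.mem_range.2 (by omega))]
  · rw [Gterm]
    simp only [pow_zero, Nat.cast_zero, mul_zero, sub_zero, one_mul, ichoose_zero_right]
    rw [show m - (k-1) * (1-1) = m by ring, show (1:ℤ) - 1 = 0 by ring]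
    rw [Fq]
    simp only [Int.cast_zero, mul_zero, add_zero, ichoose_zero_right, Int.cast_one, mul_one]
    rw [div_self (by exact_mod_cast (by omega : m ≠ 0))]
  · intro i _ hi
    rw [Gterm, Fq_neg]
    · ring
    · omega

lemma G_rec {u k m n : ℤ} (hk : 2 ≤ k) (hu : 0 ≤ u) (hn : 2 ≤ n)
    (hc : 1 ≤ m - (k - 1) * (n - 1)) (hum : u ≤ m - 1) :
    G u k m n = G u k (m - 1) n + G u k m (n - 1) := by
  rw [G, G, G, ← Finset.sum_add_distrib]
  apply Finset.sum_congr rfl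
  intro i hi
  rw [Gterm, Gterm, Gterm]
  have hiu : (i : ℤ) * k ≤ u := by
    have : (i : ℤ) ≤ u / k := by
      simp only [Finset.mem_range] at hi
      have h0 : 0 ≤ u / k := Int.ediv_nonneg hu (by omega)
      omega
    calc (i : ℤ) * k ≤ u / k * k := by
          apply mul_le_mul_of_nonneg_right this (by omega)
      _ ≤ u := Int.ediv_mul_le u (by omega)
  have hnot : ¬(m - (k - 1) * (n - 1) = 1 ∧ n - 1 - (i : ℤ) = 0) := by
    rintro ⟨h1, h2⟩
    have : (i : ℤ) = n - 1 := by omega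
    nlinarith
  have := Fq_rec (k := k) (c := m - (k-1)*(n-1)) (a := n - 1 - (i:ℤ)) hk hc hnot
  rw [show m - 1 - (k-1)*(n-1) = m - (k-1)*(n-1) - 1 by ring,
    show m - (k-1)*(n-1-1) = m - (k-1)*(n-1) + k - 1 by ring,
    show n - 1 - 1 - (i:ℤ) = n - 1 - (i:ℤ) - 1 by ring, this]
  ring

lemma G_shift {u k n : ℤ} (hk : 2 ≤ k) (hku : k ≤ u) :
    G u k u n = G (u - 1) k u n - G (u - k) k (u - k + 1) (n - 1) := by
  have hk0 : (0:ℤ) < k := by omega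
  have hI1 : 1 ≤ u / k := by rw [Int.le_ediv_iff_mul_le hk0]; omega
  set I : ℕ := (u / k).toNat with hIdef
  have hIz : (I : ℤ) = u / k := Int.toNat_of_nonneg (by omega)
  have hsplit : ∀ i ∈ Finset.range (I + 1),
      Gterm u k u n i =
        Gterm (u - 1) k u n i +
          ((-1:ℚ) ^ i * Fq k (u - (k - 1) * (n - 1)) (n - 1 - (i:ℤ)) *
            (ichoose (u - 1 - (k - 1) * (i:ℤ)) ((i:ℤ) - 1) : ℚ)) := by
    intro i hi
    simp only [Finset.mem_range] at hi
    have hik : (i : ℤ) ≤ u / k := by omega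
    have hiu : (i : ℤ) * k ≤ u := by
      calc (i : ℤ) * k ≤ u / k * k := by
            apply mul_le_mul_of_nonneg_right hik (by omega)
        _ ≤ u := Int.ediv_mul_le u (by omega)
    have h1 : 1 ≤ u - (k - 1) * (i:ℤ) := by
      rcases Nat.eq_zero_or_pos i with h0 | h0
      · subst h0; simp; omega
      · have : (1:ℤ) ≤ (i:ℤ) := by exact_mod_cast h0
        nlinarith
    rw [Gterm, Gterm, ichoose_pascal h1 (by positivity),
      show u - (k - 1) * (i:ℤ) - 1 = u - 1 - (k - 1) * (i:ℤ) by ring]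
    push_cast
    ring
  have hediv : (u - k) / k = u / k - 1 := by
    have h := Int.add_mul_ediv_right u (-1) (show k ≠ 0 by omega)
    rw [show u + -1 * k = u - k by ring] at h
    omega
  have hI2 : ((u - k) / k).toNat + 1 = I := by omega
  have e1 : ∑ i ∈ Finset.range (I + 1), Gterm (u - 1) k u n i = G (u - 1) k u n := by
    rw [G_eq_sum_range u n hk (by omega : (0:ℤ) ≤ u - 1) (J := I)]
    have : (u - 1) / k ≤ u / k := Int.ediv_le_ediv hk0 (by omega)
    have h0 : 0 ≤ (u - 1) / k := Int.ediv_nonneg (by omega) (by omega)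
    omega
  have e2 : ∑ i ∈ Finset.range (I + 1),
      ((-1:ℚ) ^ i * Fq k (u - (k - 1) * (n - 1)) (n - 1 - (i:ℤ)) *
        (ichoose (u - 1 - (k - 1) * (i:ℤ)) ((i:ℤ) - 1) : ℚ)) =
      - G (u - k) k (u - k + 1) (n - 1) := by
    rw [Finset.sum_range_succ']
    have h0 : ((-1:ℚ) ^ 0 * Fq k (u - (k - 1) * (n - 1)) (n - 1 - ((0:ℕ):ℤ)) *
        (ichoose (u - 1 - (k - 1) * ((0:ℕ):ℤ)) (((0:ℕ):ℤ) - 1) : ℚ)) = 0 := by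
      rw [ichoose_neg (by norm_num)]; simp
    rw [h0, add_zero, G, hI2, ← Finset.sum_neg_distrib]
    apply Finset.sum_congr rfl
    intro i _
    rw [Gterm]
    rw [show u - k + 1 - (k - 1) * (n - 1 - 1) = u - (k - 1) * (n - 1) by ring]
    push_cast
    rw [show n - 1 - ((i:ℤ) + 1) = n - 1 - 1 - (i:ℤ) by ring,
      show u - 1 - (k - 1) * ((i:ℤ) + 1) = u - k - (k - 1) * (i:ℤ) by ring,
      show (i:ℤ) + 1 - 1 = (i:ℤ) by ring]
    ring
  rw [G, Finset.sum_congr rfl hsplit, Finset.sum_add_distrib, e1, e2]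
  ring

lemma count_add (s : List Bool) : s.count true + s.count false = s.length := by
  induction s with
  | nil => simp
  | cons b t ih => cases b <;> simp [List.count_cons] <;> omega

lemma L_finite (u k m n : ℤ) : (L u k m n).Finite := by
  apply Set.Finite.subset (List.finite_length_le Bool (m + n - u).toNat)
  intro s hs
  obtain ⟨h1, h2, -⟩ := hs
  have := count_add s
  simp only [Set.mem_setOf_eq]
  omega

lemma L_empty_of_le {u k m n : ℤ} (h : m ≤ u) : L u k m n = ∅ := by
  ext s
  simp only [Set.mem_empty_iff_false, iff_false]
  rintro ⟨h1, -, -⟩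
  have : (0:ℤ) ≤ (s.count true : ℤ) := by positivity
  omega

lemma L_empty_line {u k m n : ℤ} (h : m - 1 < (k - 1) * (n - 1)) : L u k m n = ∅ := by
  ext s
  simp only [Set.mem_empty_iff_false, iff_false]
  rintro ⟨h1, h2, h3⟩
  have h4 := h3 s (List.prefix_refl s)
  rw [show (1 + (s.count false : ℤ)) - 1 = n - 1 by omega] at h4
  omega

lemma L_concat_true {u k m n : ℤ} (hline : (k - 1) * (n - 1) ≤ m - 1) (t : List Bool) :
    t ++ [true] ∈ L u k m n ↔ t ∈ L u k (m - 1) n := by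
  have hct : ((t ++ [true]).count true : ℤ) = (t.count true : ℤ) + 1 := by
    simp [List.count_append]
  have hcf : ((t ++ [true]).count false : ℤ) = (t.count false : ℤ) := by
    simp [List.count_append]
  constructor
  · rintro ⟨h1, h2, h3⟩
    refine ⟨by omega, by omega, ?_⟩
    intro t' ht'
    exact h3 t' (ht'.trans (List.prefix_append t [true]))
  · rintro ⟨h1, h2, h3⟩
    refine ⟨by omega, by omega, ?_⟩
    intro t' ht'
    rw [List.prefix_concat_iff] at ht'
    rcases ht' with rfl | ht'
    · rw [hct, hcf, show (1 + (t.count false : ℤ)) - 1 = n - 1 by omega]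
      omega
    · exact h3 t' ht'

lemma L_concat_false {u k m n : ℤ} (hline : (k - 1) * (n - 1) ≤ m - 1) (t : List Bool) :
    t ++ [false] ∈ L u k m n ↔ t ∈ L u k m (n - 1) := by
  have hct : ((t ++ [false]).count true : ℤ) = (t.count true : ℤ) := by
    simp [List.count_append]
  have hcf : ((t ++ [false]).count false : ℤ) = (t.count false : ℤ) + 1 := by
    simp [List.count_append]
  constructor
  · rintro ⟨h1, h2, h3⟩
    refine ⟨by omega, by omega, ?_⟩
    intro t' ht'
    exact h3 t' (ht'.trans (List.prefix_append t [false]))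
  · rintro ⟨h1, h2, h3⟩
    refine ⟨by omega, by omega, ?_⟩
    intro t' ht'
    rw [List.prefix_concat_iff] at ht'
    rcases ht' with rfl | ht'
    · rw [hct, hcf, show (1 + ((t.count false : ℤ) + 1)) - 1 = n - 1 by omega]
      omega
    · exact h3 t' ht'

lemma ncard_L_split {u k m n : ℤ} (hn : 2 ≤ n) (hline : (k - 1) * (n - 1) ≤ m - 1) :
    (L u k m n).ncard = (L u k (m - 1) n).ncard + (L u k m (n - 1)).ncard := by
  have heq : L u k m n =
      (fun t => t ++ [true]) '' L u k (m - 1) n ∪ (fun t => t ++ [false]) '' L u k m (n - 1) := by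
    ext s
    constructor
    · intro hs
      have hne : s ≠ [] := by
        rintro rfl
        obtain ⟨-, h2, -⟩ := hs
        simp at h2
        omega
      rcases s.eq_nil_or_concat' with rfl | ⟨t, b, rfl⟩
      · exact absurd rfl hne
      · cases b
        · exact Or.inr ⟨t, (L_concat_false hline t).1 hs, rfl⟩
        · exact Or.inl ⟨t, (L_concat_true hline t).1 hs, rfl⟩
    · rintro (⟨t, ht, rfl⟩ | ⟨t, ht, rfl⟩)
      · exact (L_concat_true hline t).2 ht
      · exact (L_concat_false hline t).2 ht
  have hdisj : Disjoint ((fun t => t ++ [true]) '' L u k (m - 1) n)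
      ((fun t => t ++ [false]) '' L u k m (n - 1)) := by
    rw [Set.disjoint_left]
    rintro s ⟨t1, -, rfl⟩ ⟨t2, -, heq2⟩
    have := congrArg List.getLast? heq2
    rw [List.getLast?_concat, List.getLast?_concat] at this
    simp at this
  rw [heq, Set.ncard_union_eq hdisj ((L_finite u k (m-1) n).image _)
      ((L_finite u k m (n-1)).image _),
    Set.ncard_image_of_injective _ (List.append_left_injective [true]),
    Set.ncard_image_of_injective _ (List.append_left_injective [false])]


lemma L_horizontal {u k m : ℤ} (hu : 0 ≤ u) (hm : u + 1 ≤ m) :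
    L u k m 1 = {List.replicate (m - u - 1).toNat true} := by
  ext s
  simp only [Set.mem_singleton_iff]
  constructor
  · rintro ⟨h1, h2, -⟩
    have hcf : s.count false = 0 := by omega
    have hall : s = List.replicate s.length true := by
      rw [List.eq_replicate_iff]
      refine ⟨rfl, ?_⟩
      intro b hb
      cases b
      · exact absurd (List.count_pos_iff.2 hb) (by omega)
      · rfl
    have hlen := count_add s
    have hct : (s.count true : ℤ) = m - u - 1 := by omega
    rw [hall]
    congr 1
    omega
  · rintro rfl
    have hct : (List.replicate (m - u - 1).toNat true).count true = (m - u - 1).toNat := by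
      simp
    have hcf : (List.replicate (m - u - 1).toNat true).count false = 0 := by
      simp [List.count_replicate]
    refine ⟨by rw [hct]; omega, by rw [hcf]; omega, ?_⟩
    intro t ht
    rw [List.prefix_replicate_iff] at ht
    obtain ⟨-, ht⟩ := ht
    have : t.count false = 0 := by rw [ht]; simp [List.count_replicate]
    rw [this]
    have : (0:ℤ) ≤ (t.count true : ℤ) := by positivity
    simp
    omega

lemma L_vertical {u k n : ℤ} (hk : 2 ≤ k) (hn : 1 ≤ n) :
    L u k (u + 1) n =
      if (k - 1) * (n - 1) ≤ u then {List.replicate (n - 1).toNat false} else ∅ := by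
  ext s
  constructor
  · rintro ⟨h1, h2, h3⟩
    have hct : s.count true = 0 := by omega
    have hall : s = List.replicate s.length false := by
      rw [List.eq_replicate_iff]
      refine ⟨rfl, ?_⟩
      intro b hb
      cases b
      · rfl
      · exact absurd (List.count_pos_iff.2 hb) (by omega)
    have hlen := count_add s
    have hcond := h3 s (List.prefix_refl s)
    rw [show (1 + (s.count false : ℤ)) - 1 = n - 1 by omega] at hcond
    have hcond' : (k - 1) * (n - 1) ≤ u := by omega
    rw [if_pos hcond']
    simp only [Set.mem_singleton_iff]
    rw [hall]
    congr 1
    omega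
  · intro hs
    by_cases hcond : (k - 1) * (n - 1) ≤ u
    swap
    · rw [if_neg hcond] at hs; exact absurd hs (Set.notMem_empty s)
    rw [if_pos hcond] at hs
    simp only [Set.mem_singleton_iff] at hs
    subst hs
    have hcf : (List.replicate (n - 1).toNat false).count false = (n - 1).toNat := by simp
    have hct : (List.replicate (n - 1).toNat false).count true = 0 := by
      simp [List.count_replicate]
    refine ⟨by rw [hct]; omega, by rw [hcf]; omega, ?_⟩
    intro t ht
    rw [List.prefix_replicate_iff] at ht
    obtain ⟨hlen, ht⟩ := ht
    have h5 : t.count false = t.length := by rw [ht]; simp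
    have h6 : t.count true = 0 := by rw [ht]; simp [List.count_replicate]
    rw [h5, h6]
    have h7 : (k - 1) * (t.length : ℤ) ≤ (k - 1) * (n - 1) := by
      apply mul_le_mul_of_nonneg_left _ (by omega)
      omega
    push_cast
    nlinarith


lemma G_vanish {u k n : ℤ} (hk : 2 ≤ k) (hu : 0 ≤ u) (hn : 2 ≤ n)
    (hcon : (k - 1) * (n - 1) ≤ u)
    (IH : ∀ u', 0 ≤ u' → u' < u → ∀ n' m' : ℤ, 1 ≤ n' →
      max (u' + 1) ((k - 1) * (n' - 1)) ≤ m' →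
      ((L u' k m' n').ncard : ℚ) = G u' k m' n') :
    G u k u n = 0 := by
  by_cases hku : k ≤ u
  swap
  · have he : (k - 1) * (n - 1) = (k - 1) * (n - 2) + (k - 1) := by ring
    have hn2 : n = 2 := by nlinarith
    have hc : u - (k - 1) * (n - 1) = 0 := by
      rw [hn2] at hcon ⊢
      rw [show (k - 1) * (2 - 1) = k - 1 by ring] at hcon ⊢
      omega
    exact G_zero hc
  · rw [G_shift hk hku]
    have he2 : (k - 1) * (n - 1 - 1) = (k - 1) * (n - 1) - (k - 1) := by ring
    have h1 : ((L (u - 1) k u n).ncard : ℚ) = G (u - 1) k u n := by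
      apply IH (u - 1) (by omega) (by omega) n u (by omega)
      apply max_le (by omega) (by omega)
    have h2 : ((L (u - k) k (u - k + 1) (n - 1)).ncard : ℚ) = G (u - k) k (u - k + 1) (n - 1) := by
      apply IH (u - k) (by omega) (by omega) (n - 1) (u - k + 1) (by omega)
      apply max_le (by omega) (by omega)
    rw [← h1, ← h2]
    have v1 := L_vertical (u := u - 1) (k := k) (n := n) hk (by omega)
    rw [show u - 1 + 1 = u by ring] at v1
    have v2 := L_vertical (u := u - k) (k := k) (n := n - 1) hk (by omega)
    rw [v1, v2]
    by_cases hcase : (k - 1) * (n - 1) ≤ u - 1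
    · rw [if_pos hcase, if_pos (by omega)]
      simp
    · rw [if_neg hcase, if_neg (by omega)]
      simp

lemma main_lemma {k : ℤ} (hk : 2 ≤ k) :
    ∀ u : ℤ, 0 ≤ u → ∀ n m : ℤ, 1 ≤ n → max (u + 1) ((k - 1) * (n - 1)) ≤ m →
      ((L u k m n).ncard : ℚ) = G u k m n := by
  suffices H : ∀ N : ℕ, ∀ u : ℤ, 0 ≤ u → u ≤ (N : ℤ) →
      ∀ n m : ℤ, 1 ≤ n → max (u + 1) ((k - 1) * (n - 1)) ≤ m →
      ((L u k m n).ncard : ℚ) = G u k m n by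
    intro u hu
    exact H u.toNat u hu (by omega)
  intro N
  induction N using Nat.strong_induction_on with
  | _ N IHN =>
  intro u hu huN
  have IHu : ∀ u', 0 ≤ u' → u' < u → ∀ n' m' : ℤ, 1 ≤ n' →
      max (u' + 1) ((k - 1) * (n' - 1)) ≤ m' →
      ((L u' k m' n').ncard : ℚ) = G u' k m' n' := by
    intro u' hu' hlt
    exact IHN u'.toNat (by omega) u' hu' (by omega)
  suffices Q : ∀ T : ℕ, ∀ n m : ℤ, 1 ≤ n → max (u + 1) ((k - 1) * (n - 1)) ≤ m →
      (m + n).toNat ≤ T → ((L u k m n).ncard : ℚ) = G u k m n by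
    intro n m hn hm
    exact Q (m + n).toNat n m hn hm le_rfl
  intro T
  induction T with
  | zero =>
    intro n m hn hm hT
    have hm1 : u + 1 ≤ m := le_trans (le_max_left _ _) hm
    omega
  | succ T IHT =>
    intro n m hn hm hT
    have hm1 : u + 1 ≤ m := le_trans (le_max_left _ _) hm
    have hm2 : (k - 1) * (n - 1) ≤ m := le_trans (le_max_right _ _) hm
    rcases eq_or_lt_of_le hn with hn1 | hn2
    · rw [← hn1, L_horizontal hu (by omega), Set.ncard_singleton, G_one hk hu (by omega)]
      simp
    · have hn2' : 2 ≤ n := hn2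
      by_cases hcz : m - (k - 1) * (n - 1) = 0
      · rw [L_empty_line (by omega), G_zero hcz, Set.ncard_empty]
        simp
      · have hc1 : 1 ≤ m - (k - 1) * (n - 1) := by omega
        have he2 : (k - 1) * (n - 1 - 1) = (k - 1) * (n - 1) - (k - 1) := by ring
        rw [ncard_L_split (by omega) (by omega), G_rec hk hu (by omega) hc1 (by omega)]
        push_cast
        have hright : ((L u k m (n - 1)).ncard : ℚ) = G u k m (n - 1) := by
          apply IHT (n - 1) m (by omega) (max_le (by omega) (by omega)) (by omega)
        have hleft : ((L u k (m - 1) n).ncard : ℚ) = G u k (m - 1) n := by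
          rcases eq_or_lt_of_le hm1 with he | hlt
          · rw [show m - 1 = u by omega, L_empty_of_le le_rfl,
              G_vanish hk hu (by omega) (by omega) IHu, Set.ncard_empty]
            simp
          · apply IHT n (m - 1) (by omega) (max_le (by omega) (by omega)) (by omega)
        rw [hleft, hright]

end CardL

theorem card_L_eq_sum (m n u k : ℤ) (hu : 0 ≤ u) (hk : 2 ≤ k) (hn : 2 ≤ n)
    (hm : max (u + 1) ((k - 1) * (n - 1)) ≤ m) :
    ((L u k m n).ncard : ℚ) =
      ∑ i ∈ Finset.range ((⌊(u : ℚ) / (k : ℚ)⌋).toNat + 1),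
        (-1 : ℚ) ^ i * ((m : ℚ) - ((k : ℚ) - 1) * ((n : ℚ) - 1)) /
            ((m : ℚ) + (n : ℚ) - 1 - (k : ℚ) * (i : ℚ)) *
          (ichoose (m + n - 1 - k * (i : ℤ)) (n - 1 - (i : ℤ)) : ℚ) *
          (ichoose (u - (k - 1) * (i : ℤ)) (i : ℤ) : ℚ) := by
  have hfloor : ⌊(u : ℚ) / (k : ℚ)⌋ = u / k := by
    have hkn : ((k.toNat : ℕ) : ℤ) = k := Int.toNat_of_nonneg (by omega)
    have hkq : ((k : ℤ) : ℚ) = ((k.toNat : ℕ) : ℚ) := by exact_mod_cast hkn.symm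
    rw [hkq, Rat.floor_intCast_div_natCast, hkn]
  rw [CardL.main_lemma hk u hu n m (by omega) hm, hfloor, CardL.G]
  apply Finset.sum_congr rfl
  intro i hi
  rw [CardL.Gterm, CardL.Fq,
    show m - (k - 1) * (n - 1) + k * (n - 1 - (i : ℤ)) = m + n - 1 - k * (i : ℤ) by ring]
  push_cast
  ring
end

section
/- For all integers u ≥ 0, k ≥ 2, n ≥ 3, and m ≥ max{u+2, (k-1)(n-1)+1}, the determinant satisfies the recurrence D(m,n,u,k) = D(m-1,n,u,k) + D(m,n-1,u,k). -/
namespace DetRec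

lemma ichoose_pascal (a b : ℤ) (ha : 1 ≤ a) :
    ichoose a b = ichoose (a - 1) b + ichoose (a - 1) (b - 1) := by
  unfold ichoose
  rcases lt_trichotomy b 0 with h | h | h
  · rw [if_neg (by omega), if_neg (by omega), if_neg (by omega)]; ring
  · subst h
    rw [if_pos le_rfl, if_pos le_rfl, if_neg (by omega)]
    simp
  · rw [if_pos (by omega), if_pos (by omega), if_pos (by omega)]
    have h1 : a.toNat = (a - 1).toNat + 1 := by omega
    have h2 : b.toNat = (b - 1).toNat + 1 := by omega
    rw [h1, h2, Nat.choose_succ_succ]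
    push_cast; ring

/-- The matrix of `D`, indexed by a natural number size. -/
def M (m u k : ℤ) (N : ℕ) : Matrix (Fin N) (Fin N) ℤ :=
  Matrix.of fun i j : Fin N =>
    ichoose (m - max u ((k - 1) * ((j : ℤ) + 1))) (1 - ((i : ℤ) + 1) + ((j : ℤ) + 1))

lemma e_pascal (m u k : ℤ) (i j : ℤ) (h : 1 ≤ m - max u ((k - 1) * (j + 1))) :
    ichoose (m - max u ((k - 1) * (j + 1))) (1 - (i + 1) + (j + 1))
      = ichoose ((m - 1) - max u ((k - 1) * (j + 1))) (1 - (i + 1) + (j + 1))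
        + ichoose ((m - 1) - max u ((k - 1) * (j + 1))) (1 - ((i + 1) + 1) + (j + 1)) := by
  rw [ichoose_pascal _ _ h, sub_right_comm]
  congr 1
  ring_nf

lemma key (m u k : ℤ) (N : ℕ)
    (hpos : ∀ j : Fin (N + 1), 1 ≤ m - max u ((k - 1) * ((j : ℤ) + 1))) :
    (M m u k (N + 1)).det = (M (m - 1) u k (N + 1)).det + (M m u k N).det := by
  set A := M (m - 1) u k (N + 1) with hA
  set P : Matrix (Fin (N + 1)) (Fin (N + 1)) ℤ :=
    Matrix.of fun i j : Fin (N + 1) =>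
      if i = j then 1 else if (j : ℕ) = (i : ℕ) + 1 then 1 else 0 with hP
  -- product rows for non-last rows
  have hPA : ∀ (i j : Fin (N + 1)), (hi : (i : ℕ) < N) →
      (P * A) i j = A i j + A ⟨(i : ℕ) + 1, by omega⟩ j := by
    intro i j hi
    rw [Matrix.mul_apply]
    set i' : Fin (N + 1) := ⟨(i : ℕ) + 1, by omega⟩ with hi'
    have hne : i ≠ i' := by
      intro h
      have := congrArg Fin.val h
      simp [hi'] at this
    have hsum : ∀ l : Fin (N + 1),
        P i l * A l j = (if i = l then A l j else 0) + (if i' = l then A l j else 0) := by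
      intro l
      by_cases h1 : i = l
      · subst h1
        simp [hP, hne.symm, if_neg (Ne.symm hne)]
      · by_cases h2 : i' = l
        · subst h2
          rw [if_neg h1, if_pos rfl]
          simp [hP, Ne.symm h1, hi']
        · have h3 : (l : ℕ) ≠ (i : ℕ) + 1 := by
            intro h
            exact h2 (Fin.ext (by simp [hi', h]))
          rw [if_neg h1, if_neg h2]
          simp [hP, h1, h3]
    rw [Finset.sum_congr rfl (fun l _ => hsum l), Finset.sum_add_distrib,
      Finset.sum_ite_eq, Finset.sum_ite_eq]
    simp
  have hPAlast : ∀ j : Fin (N + 1), (P * A) (Fin.last N) j = A (Fin.last N) j := by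
    intro j
    rw [Matrix.mul_apply]
    have hsum : ∀ l : Fin (N + 1),
        P (Fin.last N) l * A l j = if Fin.last N = l then A l j else 0 := by
      intro l
      by_cases h1 : Fin.last N = l
      · subst h1; simp [hP]
      · have h3 : (l : ℕ) ≠ (Fin.last N : ℕ) + 1 := by
          have := l.isLt
          simp only [Fin.val_last]
          omega
        rw [if_neg h1]
        simp only [hP, Matrix.of_apply, if_neg h1, if_neg h3, zero_mul]
    rw [Finset.sum_congr rfl (fun l _ => hsum l), Finset.sum_ite_eq]
    simp
  have hdetP : P.det = 1 := by
    rw [Matrix.det_of_upperTriangular]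
    · simp [hP]
    · intro i j hji
      have hji' : (j : ℕ) < (i : ℕ) := hji
      have h1 : i ≠ j := by
        intro h; subst h; exact absurd hji' (lt_irrefl _)
      simp [hP, h1]
      omega
  -- decompose M m as updateRow of P * A
  have hM : M m u k (N + 1) =
      (P * A).updateRow (Fin.last N) (A (Fin.last N) + Pi.single (Fin.last N) 1) := by
    ext i j
    by_cases hi : i = Fin.last N
    · subst hi
      rw [Matrix.updateRow_self]
      have hp := e_pascal m u k ((Fin.last N : ℕ) : ℤ) ((j : ℕ) : ℤ) (hpos j)
      simp only [M, Matrix.of_apply, Pi.add_apply]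
      rw [hp, hA]
      simp only [M, Matrix.of_apply]
      congr 1
      -- remaining: second term equals Pi.single
      have hjle : (j : ℕ) ≤ N := by have := j.isLt; omega
      by_cases hj : j = Fin.last N
      · subst hj
        rw [Pi.single_eq_same]
        have hb : (1 - (((Fin.last N : ℕ) : ℤ) + 1 + 1) + (((Fin.last N : ℕ) : ℤ) + 1)) = 0 := by
          ring
        rw [hb]
        simp [ichoose]
      · rw [Pi.single_eq_of_ne hj]
        have hjlt : (j : ℕ) < N := by
          rcases lt_or_eq_of_le hjle with h | h
          · exact h
          · exact absurd (Fin.ext (by simp [h])) hj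
        have hb : ¬ (0 : ℤ) ≤ 1 - ((((Fin.last N : Fin (N + 1)) : ℕ) : ℤ) + 1 + 1) + (((j : ℕ) : ℤ) + 1) := by
          simp only [Fin.val_last]
          omega
        unfold ichoose
        rw [if_neg hb]
    · have hilt : (i : ℕ) < N := by
        have h1 := i.isLt
        have h2 : (i : ℕ) ≠ N := by
          intro h; exact hi (Fin.ext (by simp [h]))
        omega
      rw [Matrix.updateRow_ne hi, hPA i j hilt]
      have hp := e_pascal m u k ((i : ℕ) : ℤ) ((j : ℕ) : ℤ) (hpos j)
      simp only [M, Matrix.of_apply]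
      rw [hp, hA]
      simp only [M, Matrix.of_apply]
      push_cast
      ring_nf
  rw [hM, Matrix.det_updateRow_add]
  congr 1
  · have hrow : A (Fin.last N) = (P * A) (Fin.last N) := funext fun j => (hPAlast j).symm
    rw [hrow, Matrix.updateRow_eq_self, Matrix.det_mul, hdetP, one_mul]
  · -- Laplace expansion along the last row
    set Q := (P * A).updateRow (Fin.last N) (Pi.single (Fin.last N) 1) with hQ
    rw [Matrix.det_succ_row Q (Fin.last N)]
    rw [Finset.sum_eq_single (Fin.last N)]
    · have hqll : Q (Fin.last N) (Fin.last N) = 1 := by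
        rw [hQ, Matrix.updateRow_self, Pi.single_eq_same]
      rw [hqll, mul_one]
      have hpow : ((-1 : ℤ) ^ ((Fin.last N : ℕ) + (Fin.last N : ℕ))) = 1 := by
        simp only [Fin.val_last]
        exact Even.neg_one_pow ⟨N, by ring⟩
      rw [hpow, one_mul, Fin.succAbove_last]
      congr 1
      ext i j
      simp only [Matrix.submatrix_apply]
      have hne : i.castSucc ≠ Fin.last N := (Fin.castSucc_lt_last i).ne
      rw [hQ, Matrix.updateRow_ne hne]
      have hilt : ((i.castSucc : Fin (N + 1)) : ℕ) < N := by
        simpa using i.isLt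
      rw [hPA _ _ hilt]
      have hp := e_pascal m u k ((i : ℕ) : ℤ) ((j : ℕ) : ℤ) (hpos j.castSucc)
      simp only [M, Matrix.of_apply, Fin.coe_castSucc] at hp ⊢
      rw [hA]
      simp only [M, Matrix.of_apply, Fin.coe_castSucc]
      rw [hp]
      push_cast
      ring_nf
    · intro j _ hj
      have : Q (Fin.last N) j = 0 := by
        rw [hQ, Matrix.updateRow_self, Pi.single_eq_of_ne hj]
      rw [this, mul_zero, zero_mul]
    · intro h
      exact absurd (Finset.mem_univ _) h

end DetRec

theorem det_recurrence (m n u k : ℤ) (hu : 0 ≤ u) (hk : 2 ≤ k) (hn : 3 ≤ n)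
    (hm : max (u + 2) ((k - 1) * (n - 1) + 1) ≤ m) :
    D m n u k = D (m - 1) n u k + D m (n - 1) u k := by
  set N := (n - 2).toNat with hN
  have h1 : (n - 1).toNat = N + 1 := by omega
  have h2 : (n - 1 - 1).toNat = N := by omega
  have hD1 : ∀ m' : ℤ, D m' n u k = (DetRec.M m' u k (N + 1)).det := by
    intro m'
    unfold D DetRec.M
    rw [h1]
  have hD2 : D m (n - 1) u k = (DetRec.M m u k N).det := by
    unfold D DetRec.M
    rw [h2]
  rw [hD1, hD1, hD2]
  apply DetRec.key
  intro j
  have hj : ((j : ℕ) : ℤ) + 1 ≤ n - 1 := by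
    have := j.isLt
    omega
  have hmu : u + 2 ≤ m := le_trans (le_max_left _ _) hm
  have hmk : (k - 1) * (n - 1) + 1 ≤ m := le_trans (le_max_right _ _) hm
  have hkj : (k - 1) * (((j : ℕ) : ℤ) + 1) ≤ (k - 1) * (n - 1) :=
    mul_le_mul_of_nonneg_left hj (by omega)
  rcases max_choice u ((k - 1) * (((j : ℕ) : ℤ) + 1)) with h | h <;> rw [h] <;> omega
end

section
/- For all integers u, k, n with k ≥ 2, u ≥ k-1, and 2 ≤ n ≤ ⌊u/(k-1)⌋ + 1, the determinant D(u+1,n,u,k) equals 1. -/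
theorem det_base_m_eq_u_add_one (u k n : ℤ) (hk : 2 ≤ k) (hu : k - 1 ≤ u)
    (hn : 2 ≤ n) (hn' : n ≤ ⌊(u : ℚ) / ((k : ℚ) - 1)⌋ + 1) :
    D (u + 1) n u k = 1 := by
  have hk1 : (0 : ℚ) < (k : ℚ) - 1 := by
    have : (1 : ℤ) < k := by omega
    push_cast
    linarith [show (1:ℚ) < (k:ℚ) by exact_mod_cast this]
  -- (n-1)*(k-1) ≤ u
  have hfloor : (n - 1 : ℤ) ≤ ⌊(u : ℚ) / ((k : ℚ) - 1)⌋ := by omega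
  have hq : ((n : ℚ) - 1) ≤ (u : ℚ) / ((k : ℚ) - 1) := by
    have := Int.le_floor.mp hfloor
    push_cast at this
    linarith
  have hmul : (n - 1) * (k - 1) ≤ u := by
    have : ((n : ℚ) - 1) * ((k : ℚ) - 1) ≤ (u : ℚ) := by
      rw [← le_div_iff₀ hk1]; exact hq
    exact_mod_cast (by push_cast; linarith : ((n - 1 : ℤ) * (k - 1) : ℚ) ≤ (u : ℚ))
  have hmax : ∀ j : Fin (n - 1).toNat, max u ((k - 1) * ((j : ℤ) + 1)) = u := by
    intro j
    have hj : (j : ℤ) < n - 1 := by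
      have := j.isLt
      omega
    have : (k - 1) * ((j : ℤ) + 1) ≤ (n - 1) * (k - 1) := by
      have hk0 : (0 : ℤ) ≤ k - 1 := by omega
      nlinarith
    exact max_eq_left (by omega)
  unfold D
  have hent : ∀ i j : Fin (n - 1).toNat,
      (Matrix.of fun i j : Fin (n - 1).toNat =>
        ichoose (u + 1 - max u ((k - 1) * ((j : ℤ) + 1)))
          (1 - ((i : ℤ) + 1) + ((j : ℤ) + 1))) i j
      = ichoose 1 ((j : ℤ) - (i : ℤ) + 1) := by
    intro i j
    simp only [Matrix.of_apply, hmax j]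
    ring_nf
  rw [show (Matrix.of fun i j : Fin (n - 1).toNat =>
        ichoose (u + 1 - max u ((k - 1) * ((j : ℤ) + 1)))
          (1 - ((i : ℤ) + 1) + ((j : ℤ) + 1)))
      = Matrix.of (fun i j : Fin (n - 1).toNat => ichoose 1 ((j : ℤ) - (i : ℤ) + 1)) from
    Matrix.ext hent]
  rw [Matrix.det_of_lowerTriangular]
  · have : ∀ i : Fin (n - 1).toNat,
        (Matrix.of (fun i j : Fin (n - 1).toNat => ichoose 1 ((j : ℤ) - (i : ℤ) + 1))) i i = 1 := by
      intro i
      simp [ichoose]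
    simp only [this]
    exact Finset.prod_const_one
  · intro i j hij
    have hij' : (i : ℤ) < (j : ℤ) := by
      have : (i : ℕ) < (j : ℕ) := hij
      exact_mod_cast this
    simp only [Matrix.of_apply, ichoose]
    rw [if_pos (by omega)]
    have h2 : 2 ≤ ((j : ℤ) - (i : ℤ) + 1).toNat := by omega
    rw [Nat.choose_eq_zero_of_lt (by omega : (1:ℤ).toNat < ((j : ℤ) - (i : ℤ) + 1).toNat)]
    simp
end

section
/- For all integers u ≥ 0, k ≥ 2, and n ≥ max{2, ⌈u/(k-1)⌉ + 1}, the determinant D((k-1)(n-1), n, u, k) equals 0. -/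
theorem det_base_boundary (u k n : ℤ) (hu : 0 ≤ u) (hk : 2 ≤ k)
    (hn : max 2 (⌈(u : ℚ) / ((k : ℚ) - 1)⌉ + 1) ≤ n) :
    D ((k - 1) * (n - 1)) n u k = 0 := by
  have hn2 : (2:ℤ) ≤ n := le_trans (le_max_left _ _) hn
  have hcard : 0 < (n-1).toNat := by omega
  have hu' : u ≤ (k-1)*(n-1) := by
    have h1 : ⌈(u : ℚ) / ((k : ℚ) - 1)⌉ + 1 ≤ n := le_trans (le_max_right _ _) hn
    have hk1 : (0:ℚ) < (k:ℚ) - 1 := by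
      have : (1:ℤ) < k := by omega
      have : (1:ℚ) < (k:ℚ) := by exact_mod_cast this
      linarith
    have h2 : (u:ℚ)/((k:ℚ)-1) ≤ (n:ℚ) - 1 := by
      calc (u:ℚ)/((k:ℚ)-1) ≤ (⌈(u : ℚ) / ((k : ℚ) - 1)⌉ : ℚ) := Int.le_ceil _
        _ ≤ (n:ℚ)-1 := by
            have : (⌈(u : ℚ) / ((k : ℚ) - 1)⌉ : ℤ) ≤ n - 1 := by omega
            push_cast
            exact_mod_cast this
    have h3 := (div_le_iff₀ hk1).mp h2
    have h4 : (u:ℚ) ≤ ((k:ℚ)-1)*((n:ℚ)-1) := by linarith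
    have h5 : (u:ℚ) ≤ (((k-1)*(n-1) : ℤ) : ℚ) := by push_cast; linarith
    exact_mod_cast h5
  unfold D
  apply Matrix.det_eq_zero_of_column_eq_zero ⟨(n-1).toNat - 1, by omega⟩
  intro i
  simp only [Matrix.of_apply]
  have hj : (((⟨(n-1).toNat - 1, by omega⟩ : Fin (n-1).toNat) : ℕ) : ℤ) = n - 2 := by
    simp only []
    omega
  rw [hj]
  have hmax : max u ((k-1)*((n-2)+1)) = (k-1)*(n-1) := by
    rw [show ((n:ℤ)-2)+1 = n-1 by ring]
    exact max_eq_right hu'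
  rw [hmax, sub_self]
  have hi : (i : ℤ) ≤ n - 2 := by
    have := i.isLt
    omega
  have hb : (0:ℤ) < 1 - ((i:ℤ)+1) + ((n:ℤ)-2+1) := by omega
  unfold ichoose
  rw [if_pos hb.le]
  have : (0:ℤ).toNat = 0 := rfl
  rw [this, Nat.choose_eq_zero_of_lt (by omega)]
  simp
end

section
/- For all integers a, b, m, n, k with k ≥ 1, 0 ≤ b ≤ n, kb ≤ a ≤ m, n ≥ 1 and m ≥ kn, the cardinality |N_{1/k}(a,b;m,n)| equals the sum over i from 0 to ⌊(a-kb)/(k+1)⌋ of (-1)^i · (m+1-kn)/(m+1-k(b+i)) · C(m+n-(k+1)(b+i), n-b-i) · C(a-k(b+i), i), where the equality is of rational numbers. -/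
/-- `N_{1/k}(a,b;m,n)`: lattice paths from `(a,b)` to `(m,n)` with unit steps `(1,0)` and `(0,1)`
(encoded as the list of steps, `true` = `(1,0)`, `false` = `(0,1)`) such that every point `(x,y)`
on the path satisfies `k*y ≤ x`. -/
def N (k a b m n : ℤ) : Set (List Bool) :=
  { s | a + (s.count true : ℤ) = m ∧ b + (s.count false : ℤ) = n ∧
        ∀ t, t <+: s → k * (b + (t.count false : ℤ)) ≤ a + (t.count true : ℤ) }

lemma ichoose_nat_s12 (x : ℤ) (i : ℕ) : ichoose x i = (x.toNat.choose i : ℤ) := by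
  simp [ichoose]

lemma ichoose_coe (x y : ℕ) : ichoose x y = (x.choose y : ℤ) := by
  simp [ichoose]

lemma ichoose_negr (x q : ℤ) (h : q < 0) : ichoose x q = 0 := by
  simp [ichoose, not_le.2 h]

lemma ichoose_zeror (x : ℤ) : ichoose x 0 = 1 := by simp [ichoose]

lemma ichoose_nonpos {x : ℤ} {i : ℕ} (hx : x ≤ 0) (hi : 1 ≤ i) : ichoose x i = 0 := by
  rw [ichoose_nat_s12, Int.toNat_of_nonpos hx]
  simp [Nat.choose_eq_zero_of_lt hi]

lemma ichoose_of_lt {x : ℤ} {i : ℕ} (h : x < i) (h0 : 0 ≤ x ∨ 1 ≤ i) : ichoose x i = 0 := by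
  have hi : 1 ≤ i := by rcases h0 with h0 | h0 <;> omega
  rcases le_or_gt x 0 with hx | hx
  · exact ichoose_nonpos hx hi
  · rw [ichoose_nat_s12]
    have : x.toNat < i := by omega
    simp [Nat.choose_eq_zero_of_lt this]

lemma ichoose_pascal_s12 (x : ℤ) (i : ℕ) (h : 0 ≤ x ∨ i ≠ 1) :
    ichoose (x+1) i = ichoose x i + ichoose x ((i:ℤ)-1) := by
  cases i with
  | zero => simp [ichoose_zeror, ichoose_negr x (-1) (by norm_num)]
  | succ j =>
    have hj : ((j:ℤ)+1-1 : ℤ) = (j:ℤ) := by ring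
    rw [show ((j+1:ℕ):ℤ) - 1 = (j:ℤ) by push_cast; ring]
    rcases le_or_gt 0 x with hx | hx
    · rw [ichoose_nat_s12, ichoose_nat_s12, ichoose_nat_s12]
      have : (x+1).toNat = x.toNat + 1 := by omega
      rw [this, Nat.choose_succ_succ']
      push_cast; ring
    · have hi : j ≠ 0 := by rcases h with h | h; omega; omega
      rw [ichoose_nonpos (by omega) (by omega), ichoose_nonpos (by omega) (by omega),
        ichoose_nonpos (le_of_lt hx) (by omega)]
      ring

def Fq (k p q : ℤ) : ℚ := (((p:ℚ) - (k:ℚ)*(q:ℚ))/((p:ℚ)+(q:ℚ))) * (ichoose (p+q) q : ℚ)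

lemma Fq_negq (k p q : ℤ) (h : q < 0) : Fq k p q = 0 := by
  simp [Fq, ichoose_negr _ _ h]

lemma Fq_zeroq (k p : ℤ) (hp : 1 ≤ p) : Fq k p 0 = 1 := by
  have : (p:ℚ) ≠ 0 := by exact_mod_cast (by omega : p ≠ 0)
  simp [Fq, ichoose_zeror, div_self, this]

lemma Fq_diag (k q : ℤ) : Fq k (k*q) q = 0 := by
  have : ((k*q : ℤ):ℚ) - (k:ℚ)*(q:ℚ) = 0 := by push_cast; ring
  simp [Fq, this]

lemma Fq_pascal (k p q : ℤ) (h : (1 ≤ q ∧ 1 ≤ p) ∨ (q = 0 ∧ 2 ≤ p) ∨ q ≤ -1) :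
    Fq k p q = Fq k (p-1) q + Fq k p (q-1) := by
  rcases h with ⟨hq, hp⟩ | ⟨hq, hp⟩ | hq
  · -- main case
    obtain ⟨P', rfl⟩ : ∃ P' : ℕ, p = (P':ℤ) + 1 := ⟨(p-1).toNat, by omega⟩
    obtain ⟨J, rfl⟩ : ∃ J : ℕ, q = (J:ℤ) + 1 := ⟨(q-1).toNat, by omega⟩
    unfold Fq
    rw [show ((P':ℤ)+1) + ((J:ℤ)+1) = ((P'+J+2 : ℕ):ℤ) by push_cast; ring,
        show ((P':ℤ)+1) - 1 + ((J:ℤ)+1) = ((P'+J+1 : ℕ):ℤ) by push_cast; ring,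
        show ((P':ℤ)+1) + ((J:ℤ)+1-1) = ((P'+J+1 : ℕ):ℤ) by push_cast; ring,
        show ((J:ℤ)+1) = ((J+1 : ℕ):ℤ) by push_cast; ring]
    rw [show (((J+1:ℕ):ℤ)-1) = ((J:ℕ):ℤ) by push_cast; ring]
    rw [ichoose_coe, ichoose_coe, ichoose_coe]
    push_cast
    set C : ℚ := (((P'+J+2).choose (J+1) : ℕ) : ℚ) with hC
    set C1 : ℚ := (((P'+J+1).choose (J+1) : ℕ) : ℚ) with hC1
    set C2 : ℚ := (((P'+J+1).choose J : ℕ) : ℚ) with hC2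
    have e1 : C = C2 + C1 := by
      rw [hC, hC1, hC2, show P'+J+2 = (P'+J+1)+1 from rfl]
      exact_mod_cast congrArg (Nat.cast (R := ℚ)) (Nat.choose_succ_succ (P'+J+1) J)
    have e2 : C1 * ((P':ℚ)+(J:ℚ)+2) = C * ((P':ℚ)+1) := by
      rw [hC, hC1]
      have h0 := Nat.choose_mul_succ_eq (P'+J+1) (J+1)
      have h2 : P'+J+1+1 = P'+J+2 := rfl
      have h3 : P'+J+1+1-(J+1) = P'+1 := by omega
      rw [h2, h3] at h0
      exact_mod_cast congrArg (Nat.cast (R := ℚ)) h0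
    have key : (((P':ℚ)+1) - k*((J:ℚ)+1)) * ((P':ℚ)+(J:ℚ)+1) * C
        = ((P':ℚ) - k*((J:ℚ)+1)) * ((P':ℚ)+(J:ℚ)+2) * C1
          + (((P':ℚ)+1) - k*(J:ℚ)) * ((P':ℚ)+(J:ℚ)+2) * C2 := by
      linear_combination (((P':ℚ)+1 - (k:ℚ)*(J:ℚ))*((P':ℚ)+(J:ℚ)+2)) * e1 + (1+(k:ℚ)) * e2
    have d1 : ((P':ℚ)+(J:ℚ)+2) ≠ 0 := by positivity
    have d2 : ((P':ℚ)+(J:ℚ)+1) ≠ 0 := by positivity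
    field_simp
    rw [show (P':ℚ)+1-1+((J:ℚ)+1) = (P':ℚ)+(J:ℚ)+1 by ring, show (P':ℚ)+1+(J:ℚ) = (P':ℚ)+(J:ℚ)+1 by ring, mul_div_assoc, div_self d2]
    linear_combination key
  · subst hq
    rw [Fq_zeroq _ _ (by omega), Fq_zeroq _ _ (by omega), Fq_negq _ _ _ (by norm_num)]
    ring
  · rw [Fq_negq _ _ _ (by omega), Fq_negq _ _ _ (by omega), Fq_negq _ _ _ (by omega)]
    ring

lemma Fq_eq (k p q : ℤ) (hp : 1 ≤ p) :
    Fq k p q = (((p:ℚ) - (k:ℚ)*(q:ℚ))/(p:ℚ)) * (ichoose (p+q-1) q : ℚ) := by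
  rcases lt_or_ge q 0 with hq | hq
  · rw [Fq_negq _ _ _ hq, ichoose_negr _ _ hq]; ring
  · obtain ⟨P', rfl⟩ : ∃ P' : ℕ, p = (P':ℤ) + 1 := ⟨(p-1).toNat, by omega⟩
    obtain ⟨J, rfl⟩ : ∃ J : ℕ, q = (J:ℤ) := ⟨q.toNat, by omega⟩
    unfold Fq
    rw [show ((P':ℤ)+1) + (J:ℤ) = ((P'+J+1 : ℕ):ℤ) by push_cast; ring,
        show ((J:ℤ)) = ((J : ℕ):ℤ) from rfl]
    rw [show (((P'+J+1:ℕ):ℤ)) - 1 = ((P'+J : ℕ):ℤ) by push_cast; ring]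
    rw [ichoose_coe, ichoose_coe]
    push_cast
    set C : ℚ := (((P'+J+1).choose J : ℕ) : ℚ) with hC
    set C1 : ℚ := (((P'+J).choose J : ℕ) : ℚ) with hC1
    have e2 : C1 * ((P':ℚ)+(J:ℚ)+1) = C * ((P':ℚ)+1) := by
      rw [hC, hC1]
      have h0 := Nat.choose_mul_succ_eq (P'+J) J
      have h3 : P'+J+1-J = P'+1 := by omega
      rw [h3] at h0
      exact_mod_cast congrArg (Nat.cast (R := ℚ)) h0
    have d1 : ((P':ℚ)+(J:ℚ)+1) ≠ 0 := by positivity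
    have d2 : ((P':ℚ)+1) ≠ 0 := by positivity
    field_simp
    linear_combination (-(((P':ℚ)+1) - (k:ℚ)*(J:ℚ))) * e2

def Zf (k M : ℤ) (Q : ℕ) : ℚ := ∑ i ∈ Finset.range (Q+1),
  (-1:ℚ)^i * Fq k (k*((Q:ℤ)-(i:ℤ))+M) ((Q:ℤ)-(i:ℤ)) * (ichoose (k*((Q:ℤ)-(i:ℤ))+M) (i:ℤ) : ℚ)

lemma Zf_base (k M : ℤ) (hM : 1 ≤ M) : Zf k M 0 = 1 := by
  unfold Zf
  rw [Finset.sum_range_one]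
  rw [show k*(((0:ℕ):ℤ)-((0:ℕ):ℤ))+M = M by norm_num,
      show (((0:ℕ):ℤ)-((0:ℕ):ℤ)) = (0:ℤ) by norm_num,
      show (((0:ℕ):ℤ)) = (0:ℤ) by norm_num]
  rw [Fq_zeroq k M hM, ichoose_zeror]
  norm_num

lemma Zf_zeroM (k : ℤ) (Q : ℕ) : Zf k 0 Q = 0 := by
  unfold Zf
  apply Finset.sum_eq_zero
  intro i hi
  rw [show k*((Q:ℤ)-(i:ℤ))+0 = k*((Q:ℤ)-(i:ℤ)) by ring, Fq_diag]
  ring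

lemma Zf_rec (k M : ℤ) (Q' : ℕ) (hk : 1 ≤ k) (hM : 1 ≤ M) (hne : ¬(M = 1 ∧ Q' = 0)) :
    Zf k M (Q'+1) = Zf k (M-1) (Q'+1) - Zf k (M-1) Q' + Zf k (M+k) Q' := by
  have hsplit : Zf k M (Q'+1) =
      (∑ i ∈ Finset.range (Q'+2), (-1:ℚ)^i * Fq k (k*(((Q'+1:ℕ):ℤ)-(i:ℤ))+M-1) (((Q'+1:ℕ):ℤ)-(i:ℤ)) * (ichoose (k*(((Q'+1:ℕ):ℤ)-(i:ℤ))+M) (i:ℤ) : ℚ))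
      + (∑ i ∈ Finset.range (Q'+2), (-1:ℚ)^i * Fq k (k*(((Q'+1:ℕ):ℤ)-(i:ℤ))+M) (((Q'+1:ℕ):ℤ)-(i:ℤ)-1) * (ichoose (k*(((Q'+1:ℕ):ℤ)-(i:ℤ))+M) (i:ℤ) : ℚ)) := by
    rw [← Finset.sum_add_distrib]
    apply Finset.sum_congr rfl
    intro i hi
    rw [Finset.mem_range] at hi
    by_cases hcase : i = Q'+1
    · subst hcase
      rw [show (((Q'+1:ℕ):ℤ)-((Q'+1:ℕ):ℤ)) = (0:ℤ) by push_cast; ring]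
      by_cases hM2 : 2 ≤ M
      · rw [show k*(0:ℤ)+M = M by ring]
        rw [Fq_pascal k M 0 (Or.inr (Or.inl ⟨rfl, hM2⟩))]
        rw [show (0:ℤ)-1 = (-1:ℤ) by ring]
        ring
      · have hM1 : M = 1 := by omega
        subst hM1
        have hQ2 : 2 ≤ Q'+1 := by omega
        rw [show k*(0:ℤ)+1 = 1 by ring]
        rw [ichoose_of_lt (by exact_mod_cast (by omega : (1:ℤ) < ((Q'+1:ℕ):ℤ))) (Or.inr (by omega))]
        push_cast
        ring
    · have hq1 : 1 ≤ ((Q'+1:ℕ):ℤ)-(i:ℤ) := by push_cast; omega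
      have hp1 : 1 ≤ k*(((Q'+1:ℕ):ℤ)-(i:ℤ))+M := by nlinarith
      rw [Fq_pascal k (k*(((Q'+1:ℕ):ℤ)-(i:ℤ))+M) (((Q'+1:ℕ):ℤ)-(i:ℤ)) (Or.inl ⟨hq1, hp1⟩)]
      ring
  rw [hsplit]
  have hsum2 : (∑ i ∈ Finset.range (Q'+2), (-1:ℚ)^i * Fq k (k*(((Q'+1:ℕ):ℤ)-(i:ℤ))+M) (((Q'+1:ℕ):ℤ)-(i:ℤ)-1) * (ichoose (k*(((Q'+1:ℕ):ℤ)-(i:ℤ))+M) (i:ℤ) : ℚ))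
      = Zf k (M+k) Q' := by
    rw [Finset.sum_range_succ]
    rw [show (((Q'+1:ℕ):ℤ)-((Q'+1:ℕ):ℤ)-1) = (-1:ℤ) by push_cast; ring]
    rw [Fq_negq _ _ _ (by norm_num)]
    rw [mul_zero, zero_mul, add_zero]
    unfold Zf
    apply Finset.sum_congr rfl
    intro i hi
    rw [Finset.mem_range] at hi
    rw [show k*(((Q'+1:ℕ):ℤ)-(i:ℤ))+M = k*(((Q':ℕ):ℤ)-(i:ℤ))+(M+k) by push_cast; ring,
        show (((Q'+1:ℕ):ℤ)-(i:ℤ)-1) = ((Q':ℕ):ℤ)-(i:ℤ) by push_cast; ring]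
  rw [hsum2]
  have hsum1 : (∑ i ∈ Finset.range (Q'+2), (-1:ℚ)^i * Fq k (k*(((Q'+1:ℕ):ℤ)-(i:ℤ))+M-1) (((Q'+1:ℕ):ℤ)-(i:ℤ)) * (ichoose (k*(((Q'+1:ℕ):ℤ)-(i:ℤ))+M) (i:ℤ) : ℚ))
      = Zf k (M-1) (Q'+1) - Zf k (M-1) Q' := by
    have hpas : ∀ i ∈ Finset.range (Q'+2),
        (-1:ℚ)^i * Fq k (k*(((Q'+1:ℕ):ℤ)-(i:ℤ))+M-1) (((Q'+1:ℕ):ℤ)-(i:ℤ)) * (ichoose (k*(((Q'+1:ℕ):ℤ)-(i:ℤ))+M) (i:ℤ) : ℚ)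
        = (-1:ℚ)^i * Fq k (k*(((Q'+1:ℕ):ℤ)-(i:ℤ))+(M-1)) (((Q'+1:ℕ):ℤ)-(i:ℤ)) * (ichoose (k*(((Q'+1:ℕ):ℤ)-(i:ℤ))+(M-1)) (i:ℤ) : ℚ)
          + (-1:ℚ)^i * Fq k (k*(((Q'+1:ℕ):ℤ)-(i:ℤ))+(M-1)) (((Q'+1:ℕ):ℤ)-(i:ℤ)) * (ichoose (k*(((Q'+1:ℕ):ℤ)-(i:ℤ))+(M-1)) ((i:ℤ)-1) : ℚ) := by
      intro i hi
      rw [Finset.mem_range] at hi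
      have hx : (0:ℤ) ≤ k*(((Q'+1:ℕ):ℤ)-(i:ℤ))+(M-1) := by
        have h1 : (0:ℤ) ≤ ((Q'+1:ℕ):ℤ)-(i:ℤ) := by push_cast; omega
        nlinarith
      have := ichoose_pascal_s12 (k*(((Q'+1:ℕ):ℤ)-(i:ℤ))+(M-1)) i (Or.inl hx)
      rw [show k*(((Q'+1:ℕ):ℤ)-(i:ℤ))+(M-1)+1 = k*(((Q'+1:ℕ):ℤ)-(i:ℤ))+M by ring] at this
      rw [this, show k*(((Q'+1:ℕ):ℤ)-(i:ℤ))+M-1 = k*(((Q'+1:ℕ):ℤ)-(i:ℤ))+(M-1) by ring]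
      push_cast
      ring
    rw [Finset.sum_congr rfl hpas, Finset.sum_add_distrib]
    have part1 : (∑ i ∈ Finset.range (Q'+2), (-1:ℚ)^i * Fq k (k*(((Q'+1:ℕ):ℤ)-(i:ℤ))+(M-1)) (((Q'+1:ℕ):ℤ)-(i:ℤ)) * (ichoose (k*(((Q'+1:ℕ):ℤ)-(i:ℤ))+(M-1)) (i:ℤ) : ℚ))
        = Zf k (M-1) (Q'+1) := by
      unfold Zf
      rfl
    have part2 : (∑ i ∈ Finset.range (Q'+2), (-1:ℚ)^i * Fq k (k*(((Q'+1:ℕ):ℤ)-(i:ℤ))+(M-1)) (((Q'+1:ℕ):ℤ)-(i:ℤ)) * (ichoose (k*(((Q'+1:ℕ):ℤ)-(i:ℤ))+(M-1)) ((i:ℤ)-1) : ℚ))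
        = - Zf k (M-1) Q' := by
      have hterm : ∀ i ∈ Finset.range (Q'+1),
          (-1:ℚ)^(i+1) * Fq k (k*(((Q'+1:ℕ):ℤ)-((i+1:ℕ):ℤ))+(M-1)) (((Q'+1:ℕ):ℤ)-((i+1:ℕ):ℤ)) * (ichoose (k*(((Q'+1:ℕ):ℤ)-((i+1:ℕ):ℤ))+(M-1)) (((i+1:ℕ):ℤ)-1) : ℚ)
          = -((-1:ℚ)^i * Fq k (k*(((Q':ℕ):ℤ)-(i:ℤ))+(M-1)) (((Q':ℕ):ℤ)-(i:ℤ)) * (ichoose (k*(((Q':ℕ):ℤ)-(i:ℤ))+(M-1)) (i:ℤ) : ℚ)) := by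
        intro i hi
        rw [show (((Q'+1:ℕ):ℤ)-((i+1:ℕ):ℤ)) = ((Q':ℕ):ℤ)-(i:ℤ) by push_cast; ring,
            show (((i+1:ℕ):ℤ)-1) = (i:ℤ) by push_cast; ring]
        ring
      rw [Finset.sum_range_succ']
      rw [show (((0:ℕ):ℤ)-1) = (-1:ℤ) by norm_num]
      rw [ichoose_negr _ _ (by norm_num)]
      rw [Int.cast_zero, mul_zero, add_zero]
      rw [Finset.sum_congr rfl hterm, Finset.sum_neg_distrib]
      unfold Zf
      rfl
    rw [part1, part2]
    ring
  rw [hsum1]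

lemma int_ind (P : ℤ → Prop) (h1 : P 1) (hs : ∀ M : ℤ, 1 ≤ M → P M → P (M+1)) (M : ℤ) (hM : 1 ≤ M) : P M := by
  obtain ⟨n, rfl⟩ : ∃ n : ℕ, M = 1 + n := ⟨(M-1).toNat, by omega⟩
  clear hM
  induction n with
  | zero => simpa using h1
  | succ n ih =>
    rw [show (1:ℤ)+((n+1:ℕ):ℤ) = (1+(n:ℕ))+1 by push_cast; ring]
    exact hs _ (by omega) ih

lemma Zf_main (k : ℤ) (hk : 1 ≤ k) : ∀ Q : ℕ, 1 ≤ Q → ∀ M : ℤ, 1 ≤ M → Zf k M Q = 0 := by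
  intro Q hQ
  induction Q, hQ using Nat.le_induction with
  | base =>
    intro M hM
    refine int_ind (fun M => Zf k M 1 = 0) ?_ ?_ M hM
    · show Zf k 1 1 = 0
      unfold Zf
      rw [Finset.sum_range_succ, Finset.sum_range_one]
      rw [show k*(((1:ℕ):ℤ)-((0:ℕ):ℤ))+1 = k+1 by push_cast; ring,
          show (((1:ℕ):ℤ)-((0:ℕ):ℤ)) = (1:ℤ) by norm_num,
          show k*(((1:ℕ):ℤ)-((1:ℕ):ℤ))+1 = (1:ℤ) by norm_num,
          show (((1:ℕ):ℤ)-((1:ℕ):ℤ)) = (0:ℤ) by norm_num]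
      rw [Fq_zeroq k 1 (by norm_num)]
      rw [show ((0:ℕ):ℤ) = (0:ℤ) by norm_num, ichoose_zeror]
      have h1 : ichoose 1 ((1:ℕ):ℤ) = 1 := by
        rw [ichoose_nat_s12]
        norm_num
      rw [h1]
      have h2 : ichoose (k+1+1) 1 = k+2 := by
        rw [show (1:ℤ) = ((1:ℕ):ℤ) from rfl, ichoose_nat_s12]
        rw [Nat.choose_one_right]
        omega
      unfold Fq
      rw [h2]
      have hd : ((k:ℚ)+1+1) ≠ 0 := by
        have : (1:ℚ) ≤ (k:ℚ) := by exact_mod_cast hk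
        nlinarith
      push_cast
      field_simp
      ring
    · intro M hM ih
      show Zf k (M+1) 1 = 0
      have h := Zf_rec k (M+1) 0 hk (by omega) (by omega)
      rw [show M+1-1 = M by ring] at h
      rw [h, ih, Zf_base k M hM, Zf_base k (M+1+k) (by omega)]
      ring
  | succ Q hQ ihQ =>
    intro M hM
    refine int_ind (fun M => Zf k M (Q+1) = 0) ?_ ?_ M hM
    · show Zf k 1 (Q+1) = 0
      have h := Zf_rec k 1 Q hk le_rfl (by omega)
      rw [show (1:ℤ)-1 = 0 by ring] at h
      rw [h, Zf_zeroM, Zf_zeroM, ihQ (1+k) (by omega)]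
      ring
    · intro M hM ih
      show Zf k (M+1) (Q+1) = 0
      have h := Zf_rec k (M+1) Q hk (by omega) (by omega)
      rw [show M+1-1 = M by ring] at h
      rw [h, ih, ihQ M hM, ihQ (M+1+k) (by omega)]
      ring
def SFt (k a b m n : ℤ) (i : ℕ) : ℚ :=
  (-1:ℚ)^i * Fq k (m+1-k*(b+(i:ℤ))) (n-b-(i:ℤ)) * (ichoose (a-k*(b+(i:ℤ))) (i:ℤ) : ℚ)

def SF (k a b m n : ℤ) : ℚ := ∑ i ∈ Finset.range ((n-b).toNat+1), SFt k a b m n i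

lemma SF_base (k a n m : ℤ) (hp : 1 ≤ m+1-k*n) : SF k a n m n = 1 := by
  unfold SF SFt
  rw [show (n-n).toNat = 0 by omega]
  rw [Finset.sum_range_one]
  rw [show n+((0:ℕ):ℤ) = n by norm_num,
      show n-n-((0:ℕ):ℤ) = (0:ℤ) by norm_num,
      show ((0:ℕ):ℤ) = (0:ℤ) by norm_num]
  rw [Fq_zeroq _ _ hp, ichoose_zeror]
  norm_num

lemma SF_split (k a b m n : ℤ) (hk : 1 ≤ k) (hbn : b < n) (h1 : k*(b+1) ≤ a) :
    SF k a b m n = SF k (a+1) b m n + SF k a (b+1) m n := by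
  obtain ⟨Q', hQ'⟩ : ∃ Q', (n-b).toNat = Q'+1 := ⟨(n-b).toNat-1, by omega⟩
  have hQ2 : (n-(b+1)).toNat = Q' := by omega
  have key : SF k (a+1) b m n = SF k a b m n - SF k a (b+1) m n := by
    unfold SF SFt
    rw [hQ', hQ2]
    have hpas : ∀ i ∈ Finset.range (Q'+1+1),
        (-1:ℚ)^i * Fq k (m+1-k*(b+(i:ℤ))) (n-b-(i:ℤ)) * (ichoose (a+1-k*(b+(i:ℤ))) (i:ℤ) : ℚ)
        = (-1:ℚ)^i * Fq k (m+1-k*(b+(i:ℤ))) (n-b-(i:ℤ)) * (ichoose (a-k*(b+(i:ℤ))) (i:ℤ) : ℚ)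
          + (-1:ℚ)^i * Fq k (m+1-k*(b+(i:ℤ))) (n-b-(i:ℤ)) * (ichoose (a-k*(b+(i:ℤ))) ((i:ℤ)-1) : ℚ) := by
      intro i hi
      have hside : 0 ≤ a-k*(b+(i:ℤ)) ∨ i ≠ 1 := by
        by_cases hi1 : i = 1
        · subst hi1; left; push_cast; omega
        · right; exact hi1
      have hp := ichoose_pascal_s12 (a-k*(b+(i:ℤ))) i hside
      rw [show a-k*(b+(i:ℤ))+1 = a+1-k*(b+(i:ℤ)) by ring] at hp
      rw [hp]
      push_cast
      ring
    rw [Finset.sum_congr rfl hpas, Finset.sum_add_distrib]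
    have cross : (∑ i ∈ Finset.range (Q'+1+1),
        (-1:ℚ)^i * Fq k (m+1-k*(b+(i:ℤ))) (n-b-(i:ℤ)) * (ichoose (a-k*(b+(i:ℤ))) ((i:ℤ)-1) : ℚ))
        = - ∑ i ∈ Finset.range (Q'+1),
        (-1:ℚ)^i * Fq k (m+1-k*(b+1+(i:ℤ))) (n-(b+1)-(i:ℤ)) * (ichoose (a-k*(b+1+(i:ℤ))) (i:ℤ) : ℚ) := by
      have hterm : ∀ i ∈ Finset.range (Q'+1),
          (-1:ℚ)^(i+1) * Fq k (m+1-k*(b+((i+1:ℕ):ℤ))) (n-b-((i+1:ℕ):ℤ)) * (ichoose (a-k*(b+((i+1:ℕ):ℤ))) (((i+1:ℕ):ℤ)-1) : ℚ)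
          = -((-1:ℚ)^i * Fq k (m+1-k*(b+1+(i:ℤ))) (n-(b+1)-(i:ℤ)) * (ichoose (a-k*(b+1+(i:ℤ))) (i:ℤ) : ℚ)) := by
        intro i hi
        rw [show (b+((i+1:ℕ):ℤ)) = b+1+(i:ℤ) by push_cast; ring,
            show n-b-((i+1:ℕ):ℤ) = n-(b+1)-(i:ℤ) by push_cast; ring,
            show (((i+1:ℕ):ℤ)-1) = (i:ℤ) by push_cast; ring]
        ring
      rw [Finset.sum_range_succ']
      rw [show (((0:ℕ):ℤ)-1) = (-1:ℤ) by norm_num]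
      rw [ichoose_negr _ _ (by norm_num)]
      rw [Int.cast_zero, mul_zero, add_zero]
      rw [Finset.sum_congr rfl hterm, Finset.sum_neg_distrib]
    rw [cross]
    ring
  rw [key]
  ring

lemma SF_low (k a b m n : ℤ) (hk : 1 ≤ k) (hlow : k*b ≤ a) (hhigh : a < k*(b+1)) :
    SF k a b m n = SF k (a+1) b m n := by
  unfold SF SFt
  apply Finset.sum_congr rfl
  intro i hi
  rcases Nat.eq_zero_or_pos i with hi0 | hi0
  · subst hi0
    rw [show ((0:ℕ):ℤ) = (0:ℤ) by norm_num, ichoose_zeror, ichoose_zeror]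
  · have hbi : k*(b+1) ≤ k*(b+(i:ℤ)) := by
      apply mul_le_mul_of_nonneg_left _ (by omega : (0:ℤ) ≤ k)
      omega
    rw [ichoose_nonpos (by omega : a-k*(b+(i:ℤ)) ≤ 0) hi0,
        ichoose_nonpos (by omega : a+1-k*(b+(i:ℤ)) ≤ 0) hi0]

lemma SF_top (k b m n : ℤ) (hk : 1 ≤ k) (hb : b < n) (hM : k*n ≤ m) :
    SF k (m+1) b m n = 0 := by
  have hcast : (((n-b).toNat : ℕ) : ℤ) = n-b := Int.toNat_of_nonneg (by omega)
  have hz : SF k (m+1) b m n = Zf k (m+1-k*n) ((n-b).toNat) := by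
    unfold SF SFt Zf
    apply Finset.sum_congr rfl
    intro i hi
    rw [show k*((((n-b).toNat : ℕ):ℤ)-(i:ℤ))+(m+1-k*n) = m+1-k*(b+(i:ℤ)) by rw [hcast]; ring,
        show (((n-b).toNat : ℕ):ℤ)-(i:ℤ) = n-b-(i:ℤ) by rw [hcast]]
  rw [hz]
  exact Zf_main k hk _ (by omega) _ (by omega)
lemma count_len (s : List Bool) : s.count true + s.count false = s.length := by
  induction s with
  | nil => simp
  | cons x t ih =>
    cases x <;> simp [List.count_cons] <;> omega

lemma N_finite (k a b m n : ℤ) : (N k a b m n).Finite := by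
  apply Set.Finite.subset (List.finite_length_eq Bool ((m-a)+(n-b)).toNat)
  intro s hs
  obtain ⟨h1, h2, _⟩ := hs
  have := count_len s
  simp only [Set.mem_setOf_eq]
  omega

lemma N_empty_far (k a b m n : ℤ) (h : m < a) : N k a b m n = ∅ := by
  ext s
  simp only [N, Set.mem_setOf_eq, Set.mem_empty_iff_false, iff_false, not_and]
  intro h1
  omega

lemma N_empty_start (k a b m n : ℤ) (h : a < k*b) : N k a b m n = ∅ := by
  ext s
  simp only [N, Set.mem_setOf_eq, Set.mem_empty_iff_false, iff_false, not_and]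
  intro _ _ h3
  have := h3 [] (List.nil_prefix)
  simp at this
  omega

lemma N_single (k a b m : ℤ) (hkb : k*b ≤ a) (ham : a ≤ m) :
    N k a b m b = {List.replicate (m-a).toNat true} := by
  ext s
  simp only [N, Set.mem_setOf_eq, Set.mem_singleton_iff]
  constructor
  · rintro ⟨h1, h2, _⟩
    have hcf : s.count false = 0 := by omega
    have hlen := count_len s
    have hall : ∀ x ∈ s, x = true := by
      intro x hx
      cases x
      · exact absurd hx (List.count_eq_zero.mp hcf)
      · rfl
    have hrep := List.eq_replicate_length.mpr hall
    rw [hrep]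
    congr 1
    omega
  · rintro rfl
    have hct : (List.replicate (m-a).toNat true).count true = (m-a).toNat := by
      simp
    have hcf : (List.replicate (m-a).toNat true).count false = 0 := by
      rw [List.count_eq_zero]
      intro h
      exact absurd (List.eq_of_mem_replicate h) (by simp)
    refine ⟨by omega, by omega, ?_⟩
    intro t ht
    have : t.count false = 0 := by
      rw [List.count_eq_zero]
      intro hmem
      have := List.eq_of_mem_replicate (ht.subset hmem)
      simp at this
    rw [this]
    push_cast
    rw [add_zero]
    omega

lemma N_split (k a b m n : ℤ) (hkb : k*b ≤ a) (hbn : b < n) :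
    N k a b m n = (List.cons true '' N k (a+1) b m n) ∪ (List.cons false '' N k a (b+1) m n) := by
  ext s
  constructor
  · rintro ⟨h1, h2, h3⟩
    cases s with
    | nil => simp at h1 h2; omega
    | cons x t =>
      cases x
      · -- false
        right
        refine ⟨t, ⟨?_, ?_, ?_⟩, rfl⟩
        · simp [List.count_cons] at h1; push_cast; omega
        · simp [List.count_cons] at h2; push_cast; omega
        · intro t' ht'
          have := h3 (false :: t') (List.cons_prefix_cons.mpr ⟨rfl, ht'⟩)
          simp [List.count_cons] at this
          push_cast at this ⊢
          have hr : k*(b+1+(t'.count false:ℤ)) = k*(b+((t'.count false:ℤ)+1)) := by ring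
          omega
      · -- true
        left
        refine ⟨t, ⟨?_, ?_, ?_⟩, rfl⟩
        · simp [List.count_cons] at h1; push_cast; omega
        · simp [List.count_cons] at h2; push_cast; omega
        · intro t' ht'
          have := h3 (true :: t') (List.cons_prefix_cons.mpr ⟨rfl, ht'⟩)
          simp [List.count_cons] at this
          push_cast at this ⊢
          omega
  · rintro (⟨t, ⟨h1, h2, h3⟩, rfl⟩ | ⟨t, ⟨h1, h2, h3⟩, rfl⟩)
    · refine ⟨?_, ?_, ?_⟩
      · simp [List.count_cons]; push_cast; omega
      · simp [List.count_cons]; push_cast; omega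
      · intro t' ht'
        cases t' with
        | nil => simp; omega
        | cons y t'' =>
          obtain ⟨rfl, ht''⟩ := List.cons_prefix_cons.mp ht'
          have := h3 t'' ht''
          simp [List.count_cons]
          push_cast at this ⊢
          omega
    · refine ⟨?_, ?_, ?_⟩
      · simp [List.count_cons]; push_cast; omega
      · simp [List.count_cons]; push_cast; omega
      · intro t' ht'
        cases t' with
        | nil =>
          simp
          omega
        | cons y t'' =>
          obtain ⟨rfl, ht''⟩ := List.cons_prefix_cons.mp ht'
          have := h3 t'' ht''
          simp [List.count_cons]
          push_cast at this ⊢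
          have hr : k*(b+1+(t''.count false:ℤ)) = k*(b+((t''.count false:ℤ)+1)) := by ring
          omega

lemma N_card_split (k a b m n : ℤ) (hkb : k*b ≤ a) (hbn : b < n) :
    (N k a b m n).ncard = (N k (a+1) b m n).ncard + (N k a (b+1) m n).ncard := by
  rw [N_split k a b m n hkb hbn]
  rw [Set.ncard_union_eq ?_ ((N_finite k (a+1) b m n).image _) ((N_finite k a (b+1) m n).image _)]
  · rw [Set.ncard_image_of_injective _ (List.cons_injective),
        Set.ncard_image_of_injective _ (List.cons_injective)]
  · rw [Set.disjoint_left]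
    rintro s ⟨t, _, rfl⟩ ⟨u, _, heq⟩
    simp at heq
lemma master (k m n : ℤ) (hk : 1 ≤ k) (hm : k*n ≤ m) :
    ∀ d : ℕ, ∀ a b : ℤ, 0 ≤ b → b ≤ n → k*b ≤ a → a ≤ m+1 → (a ≤ m ∨ b < n) →
      ((m+1-a)+(n-b)).toNat = d → ((N k a b m n).ncard : ℚ) = SF k a b m n := by
  intro d
  induction d using Nat.strong_induction_on with
  | _ d ih =>
    intro a b hb hbn hkb ham hdisj hd
    by_cases hbn' : b = n
    · subst hbn'
      have ham' : a ≤ m := by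
        rcases hdisj with h | h
        · exact h
        · omega
      rw [N_single k a b m hkb ham', Set.ncard_singleton, SF_base k a b m (by omega)]
      norm_num
    · have hbn2 : b < n := lt_of_le_of_ne hbn hbn'
      by_cases ham' : a = m+1
      · subst ham'
        rw [N_empty_far k (m+1) b m n (by omega), Set.ncard_empty, SF_top k b m n hk hbn2 hm]
        norm_num
      · have ham2 : a ≤ m := by omega
        have hsplit := N_card_split k a b m n hkb hbn2
        have ih1 : ((N k (a+1) b m n).ncard : ℚ) = SF k (a+1) b m n :=
          ih (((m+1-(a+1))+(n-b)).toNat) (by omega) (a+1) b hb hbn (by omega) (by omega)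
            (Or.inr hbn2) rfl
        by_cases hlow : k*(b+1) ≤ a
        · have ih2 : ((N k a (b+1) m n).ncard : ℚ) = SF k a (b+1) m n :=
            ih (((m+1-a)+(n-(b+1))).toNat) (by omega) a (b+1) (by omega) (by omega) hlow
              (by omega) (Or.inl ham2) rfl
          rw [SF_split k a b m n hk hbn2 hlow, hsplit]
          push_cast
          rw [ih1, ih2]
        · have hempty : N k a (b+1) m n = ∅ := N_empty_start k a (b+1) m n (by omega)
          rw [SF_low k a b m n hk hkb (by omega), hsplit, hempty]
          rw [Set.ncard_empty]
          push_cast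
          rw [ih1]
          norm_num

theorem card_N_eq_sum (a b m n k : ℤ) (hk : 1 ≤ k) (hb : 0 ≤ b) (hbn : b ≤ n)
    (hkb : k * b ≤ a) (ham : a ≤ m) (hn : 1 ≤ n) (hm : k * n ≤ m) :
    ((N k a b m n).ncard : ℚ) =
      ∑ i ∈ Finset.range ((⌊((a : ℚ) - (k : ℚ) * (b : ℚ)) / ((k : ℚ) + 1)⌋).toNat + 1),
        (-1 : ℚ) ^ i * ((m : ℚ) + 1 - (k : ℚ) * (n : ℚ)) /
            ((m : ℚ) + 1 - (k : ℚ) * ((b : ℚ) + (i : ℚ))) *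
          (ichoose (m + n - (k + 1) * (b + (i : ℤ))) (n - b - (i : ℤ)) : ℚ) *
          (ichoose (a - k * (b + (i : ℤ))) (i : ℤ) : ℚ) := by
  have hmaster := master k m n hk hm (((m+1-a)+(n-b)).toNat) a b hb hbn hkb (by omega)
    (Or.inl ham) rfl
  rw [hmaster]
  set R := (⌊((a : ℚ) - (k : ℚ) * (b : ℚ)) / ((k : ℚ) + 1)⌋).toNat + 1 with hR
  set B := max R ((n-b).toNat + 1) with hB
  have hfl0 : 0 ≤ ⌊((a : ℚ) - (k : ℚ) * (b : ℚ)) / ((k : ℚ) + 1)⌋ := by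
    apply Int.floor_nonneg.mpr
    apply div_nonneg
    · have : ((k*b : ℤ):ℚ) ≤ ((a:ℤ):ℚ) := by exact_mod_cast hkb
      push_cast at this
      linarith
    · have : (1:ℚ) ≤ (k:ℚ) := by exact_mod_cast hk
      linarith
  have hSF : SF k a b m n = ∑ i ∈ Finset.range B, SFt k a b m n i := by
    apply Finset.sum_subset (Finset.range_subset_range.mpr (le_max_right _ _))
    intro i _ hnot
    rw [Finset.mem_range, not_lt] at hnot
    unfold SFt
    rw [Fq_negq _ _ _ (by omega : n-b-(i:ℤ) < 0)]
    ring
  rw [hSF]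
  have hext : ∑ i ∈ Finset.range R,
        (-1 : ℚ) ^ i * ((m : ℚ) + 1 - (k : ℚ) * (n : ℚ)) /
            ((m : ℚ) + 1 - (k : ℚ) * ((b : ℚ) + (i : ℚ))) *
          (ichoose (m + n - (k + 1) * (b + (i : ℤ))) (n - b - (i : ℤ)) : ℚ) *
          (ichoose (a - k * (b + (i : ℤ))) (i : ℤ) : ℚ)
      = ∑ i ∈ Finset.range B,
        (-1 : ℚ) ^ i * ((m : ℚ) + 1 - (k : ℚ) * (n : ℚ)) /
            ((m : ℚ) + 1 - (k : ℚ) * ((b : ℚ) + (i : ℚ))) *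
          (ichoose (m + n - (k + 1) * (b + (i : ℤ))) (n - b - (i : ℤ)) : ℚ) *
          (ichoose (a - k * (b + (i : ℤ))) (i : ℤ) : ℚ) := by
    apply Finset.sum_subset (Finset.range_subset_range.mpr (le_max_left _ _))
    intro i _ hnot
    rw [Finset.mem_range, not_lt] at hnot
    have hi1 : 1 ≤ i := by omega
    have hfl : (⌊((a : ℚ) - (k : ℚ) * (b : ℚ)) / ((k : ℚ) + 1)⌋ : ℤ) < (i:ℤ) := by omega
    have hk1 : (0:ℚ) < (k:ℚ) + 1 := by
      have : (1:ℚ) ≤ (k:ℚ) := by exact_mod_cast hk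
      linarith
    have hlt : ((a : ℚ) - (k : ℚ) * (b : ℚ)) / ((k : ℚ) + 1) < ((i:ℤ):ℚ) :=
      Int.floor_lt.mp hfl
    have hlt2 : (a : ℚ) - (k : ℚ) * (b : ℚ) < ((i:ℤ):ℚ) * ((k:ℚ)+1) :=
      (div_lt_iff₀ hk1).mp hlt
    have hlt3 : a - k*b < (i:ℤ)*(k+1) := by exact_mod_cast hlt2
    have he1 : k*(b+(i:ℤ)) = k*b + k*(i:ℤ) := by ring
    have he2 : (i:ℤ)*(k+1) = k*(i:ℤ) + (i:ℤ) := by ring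
    have hzz : ichoose (a - k * (b + (i : ℤ))) (i : ℤ) = 0 :=
      ichoose_of_lt (by omega) (Or.inr hi1)
    rw [hzz]
    push_cast
    ring
  rw [hext]
  apply Finset.sum_congr rfl
  intro i _
  by_cases hz : ichoose (a-k*(b+(i:ℤ))) (i:ℤ) = 0
  · unfold SFt
    rw [hz]
    push_cast
    ring
  · have hx0 : 0 ≤ a-k*(b+(i:ℤ)) := by
      by_contra hcon
      rcases Nat.eq_zero_or_pos i with h0 | h0
      · subst h0
        have : k*(b+((0:ℕ):ℤ)) = k*b := by norm_num
        omega
      · exact hz (ichoose_nonpos (by omega) h0)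
    have hxi : (i:ℤ) ≤ a-k*(b+(i:ℤ)) := by
      by_contra hcon
      exact hz (ichoose_of_lt (by omega) (Or.inl hx0))
    have hp1 : 1 ≤ m+1-k*(b+(i:ℤ)) := by omega
    unfold SFt
    rw [Fq_eq k _ _ hp1]
    rw [show m+1-k*(b+(i:ℤ))+(n-b-(i:ℤ))-1 = m+n-(k+1)*(b+(i:ℤ)) by ring]
    push_cast
    ring
end
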